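/- arXiv:1502.06243 — 8 statements merged into one kernel-verified Lean document; each statement's English description precedes it below -/
import Mathlib

section
/- Let Δ be a countable discrete group and let v, w : Δ → ℝ satisfy Σ_{δ∈Δ} |v(δ)| < ∞ and Σ_{δ∈Δ} |w(δ)| < ∞. If the convolution v·w equals δ_e, the indicator function of the identity element, then also w·v = δ_e; that is, the convolution algebra ℓ¹(Δ,ℝ) is directly finite. -/
set_option linter.unusedSectionVars false
set_option linter.unusedVariables false

open scoped ENNReal
open scoped RealInnerProductSpace

namespace Kap
variable {Δ : Type*} [Group Δ]

/-- ℓ¹ convolution of real functions on a group. -/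
noncomputable def conv (a b : Δ → ℝ) (γ : Δ) : ℝ := ∑' δ, a δ * b (δ⁻¹ * γ)

lemma abs_tsum_le (f : Δ → ℝ) (hf : Summable fun δ => |f δ|) :
    |∑' δ, f δ| ≤ ∑' δ, |f δ| := by
  simpa [Real.norm_eq_abs] using
    norm_tsum_le_tsum_norm (f := f) (by simpa [Real.norm_eq_abs] using hf)

lemma abs_le_tsum_abs (c : Δ → ℝ) (hc : Summable fun δ => |c δ|) (x : Δ) :
    |c x| ≤ ∑' δ, |c δ| :=
  Summable.le_tsum hc x fun _ _ => abs_nonneg _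

/-- summability of a convolution section when the second factor is bounded -/
lemma summable_sect (a : Δ → ℝ) (ha : Summable fun δ => |a δ|) (c : Δ → ℝ) {M : ℝ}
    (hc : ∀ x, |c x| ≤ M) (γ : Δ) : Summable fun δ => a δ * c (δ⁻¹ * γ) := by
  rw [← summable_abs_iff]
  apply Summable.of_nonneg_of_le (fun δ => abs_nonneg _) (fun δ => ?_) (ha.mul_right M)
  rw [abs_mul]
  exact mul_le_mul_of_nonneg_left (hc _) (abs_nonneg _)

/-- the 2-variable kernel for associativity is summable over the product -/
lemma summable_kernel (a b : Δ → ℝ) (ha : Summable fun δ => |a δ|)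
    (hb : Summable fun δ => |b δ|) (c : Δ × Δ → ℝ) {M : ℝ}
    (hc : ∀ x, |c x| ≤ M) :
    Summable fun p : Δ × Δ => a p.1 * b p.2 * c p := by
  rw [← summable_abs_iff]
  have hab : Summable fun p : Δ × Δ => |a p.1| * |b p.2| := ha.mul_of_nonneg hb
    (fun δ => abs_nonneg _) (fun δ => abs_nonneg _)
  apply Summable.of_nonneg_of_le (fun p => abs_nonneg _) (fun p => ?_) (hab.mul_right M)
  rw [abs_mul, abs_mul]
  exact mul_le_mul_of_nonneg_left (hc _) (mul_nonneg (abs_nonneg _) (abs_nonneg _))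

/-- the convolution kernel over the product is summable -/
lemma summable_conv_kernel (a b : Δ → ℝ) (ha : Summable fun δ => |a δ|)
    (hb : Summable fun δ => |b δ|) :
    Summable fun p : Δ × Δ => a p.1 * b (p.1⁻¹ * p.2) := by
  have hab : Summable fun p : Δ × Δ => a p.1 * b p.2 := by
    rw [← summable_abs_iff]
    simpa [abs_mul] using ha.mul_of_nonneg hb (fun δ => abs_nonneg _) (fun δ => abs_nonneg _)
  have := ((Equiv.refl Δ).prodShear (fun δ => Equiv.mulLeft δ⁻¹)).summable_iff
      (f := fun p : Δ × Δ => a p.1 * b p.2) |>.2 hab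
  simpa [Equiv.prodShear, Function.comp_def] using this

/-- convolutions of ℓ¹ functions are ℓ¹ -/
lemma summable_conv (a b : Δ → ℝ) (ha : Summable fun δ => |a δ|)
    (hb : Summable fun δ => |b δ|) : Summable fun γ => |conv a b γ| := by
  have hk := summable_conv_kernel a b ha hb
  have hk' : Summable fun p : Δ × Δ => |a p.1 * b (p.1⁻¹ * p.2)| := by
    rw [summable_abs_iff]; exact hk
  have h2 : Summable fun γ => ∑' δ, |a δ * b (δ⁻¹ * γ)| := hk'.prod_symm.prod
  apply Summable.of_nonneg_of_le (fun γ => abs_nonneg _) (fun γ => ?_) h2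
  exact abs_tsum_le _ (hk'.prod_symm.prod_factor γ)

/-- boundedness of a convolution when both are ℓ¹ -/
lemma conv_bound (a b : Δ → ℝ) (ha : Summable fun δ => |a δ|)
    (hb : Summable fun δ => |b δ|) (γ : Δ) :
    |conv a b γ| ≤ (∑' δ, |a δ|) * (∑' δ, |b δ|) := by
  refine (abs_tsum_le _ ?_).trans ?_
  · exact (summable_conv_kernel a b ha hb).prod_symm.prod_factor γ |>.abs
  have h1 : ∀ δ, |a δ * b (δ⁻¹ * γ)| ≤ |a δ| * (∑' x, |b x|) := fun δ => by
    rw [abs_mul]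
    exact mul_le_mul_of_nonneg_left (abs_le_tsum_abs b hb _) (abs_nonneg _)
  calc (∑' δ, |a δ * b (δ⁻¹ * γ)|) ≤ ∑' δ, |a δ| * (∑' x, |b x|) := by
        apply Summable.tsum_le_tsum h1 _ (ha.mul_right _)
        · rw [← summable_abs_iff]
          simpa [abs_abs] using (summable_sect a ha b (abs_le_tsum_abs b hb) γ).abs
      _ = _ := tsum_mul_right




variable {Δ : Type*} [Group Δ]

/-- generalized associativity: `a, b ∈ ℓ¹`, `c` bounded. -/
lemma conv_assoc (a b : Δ → ℝ) (ha : Summable fun δ => |a δ|) (hb : Summable fun δ => |b δ|)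
    (c : Δ → ℝ) {M : ℝ} (hc : ∀ x, |c x| ≤ M) (γ : Δ) :
    ∑' τ, conv a b τ * c (τ⁻¹ * γ) = ∑' δ, a δ * conv b c (δ⁻¹ * γ) := by
  set F : Δ × Δ → ℝ := fun p => a p.1 * b p.2 * c (p.2⁻¹ * (p.1⁻¹ * γ)) with hF
  have hFs : Summable F :=
    summable_kernel a b ha hb (fun p => c (p.2⁻¹ * (p.1⁻¹ * γ))) (fun p => hc _)
  set E : Δ × Δ ≃ Δ × Δ :=
    (Equiv.prodComm Δ Δ).trans ((Equiv.refl Δ).prodShear fun δ => Equiv.mulLeft δ⁻¹) with hE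
  have hEF : ∀ p : Δ × Δ, F (E p) = a p.2 * b (p.2⁻¹ * p.1) * c (p.1⁻¹ * γ) := by
    rintro ⟨τ, δ⟩
    simp only [hF, hE, Equiv.trans_apply, Equiv.prodComm_apply, Equiv.prodShear,
      Equiv.coe_fn_mk, Equiv.refl_apply, Equiv.coe_mulLeft, Prod.swap_prod_mk]
    congr 2
    group
  have hGs : Summable (F ∘ E) := E.summable_iff.2 hFs
  -- RHS
  have hrhs : ∑' p, F p = ∑' δ, a δ * conv b c (δ⁻¹ * γ) := by
    rw [Summable.tsum_prod hFs]
    refine tsum_congr fun δ => ?_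
    calc ∑' β, F (δ, β) = ∑' β, a δ * (b β * c (β⁻¹ * (δ⁻¹ * γ))) :=
          tsum_congr fun β => mul_assoc _ _ _
      _ = a δ * ∑' β, b β * c (β⁻¹ * (δ⁻¹ * γ)) := tsum_mul_left
      _ = a δ * conv b c (δ⁻¹ * γ) := rfl
  -- LHS
  have hlhs : ∑' p, F p = ∑' τ, conv a b τ * c (τ⁻¹ * γ) := by
    rw [← E.tsum_eq F]
    have : ∑' p, F (E p) = ∑' p : Δ × Δ, a p.2 * b (p.2⁻¹ * p.1) * c (p.1⁻¹ * γ) :=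
      tsum_congr hEF
    rw [this]
    have hGs' : Summable fun p : Δ × Δ => a p.2 * b (p.2⁻¹ * p.1) * c (p.1⁻¹ * γ) := by
      have := hGs
      rwa [show F ∘ E = fun p : Δ × Δ => a p.2 * b (p.2⁻¹ * p.1) * c (p.1⁻¹ * γ) from
        funext hEF] at this
    rw [Summable.tsum_prod hGs']
    refine tsum_congr fun τ => ?_
    simp only [conv]
    rw [← tsum_mul_right]
  rw [← hlhs, hrhs]



section Delta
variable {Δ : Type*} [Group Δ] [DecidableEq Δ]

/-- the identity of the convolution algebra -/
def dlt : Δ → ℝ := fun γ => if γ = 1 then 1 else 0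

lemma dlt_bound : ∀ x : Δ, |dlt x| ≤ 1 := by
  intro x; unfold dlt; split <;> simp

lemma summable_dlt : Summable fun γ : Δ => dlt γ := by
  apply summable_of_ne_finset_zero (s := {1})
  intro γ hγ
  simp only [Finset.mem_singleton] at hγ
  simp [dlt, hγ]

lemma summable_dlt_abs : Summable fun γ : Δ => |dlt γ| :=
  summable_abs_iff.2 summable_dlt

lemma conv_dlt (a : Δ → ℝ) (γ : Δ) : conv a dlt γ = a γ := by
  unfold conv
  rw [tsum_eq_single γ]
  · simp [dlt]
  · intro δ hδ
    have : ¬(δ⁻¹ * γ = 1) := by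
      rw [inv_mul_eq_one]; exact hδ
    simp [dlt, this]

lemma dlt_conv (a : Δ → ℝ) (γ : Δ) : conv dlt a γ = a γ := by
  unfold conv
  rw [tsum_eq_single 1]
  · simp [dlt]
  · intro δ hδ
    simp [dlt, hδ]

end Delta
/-- reindexing linear isometry equivalence of ℓ² along an equiv of the index type -/
noncomputable def shift (e : Δ ≃ Δ) :
    lp (fun _ : Δ => ℝ) 2 ≃ₗᵢ[ℝ] lp (fun _ : Δ => ℝ) 2 where
  toFun x := ⟨fun γ => x (e γ), by
    apply memℓp_gen
    have := (lp.memℓp x)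
    rw [memℓp_gen_iff (by norm_num)] at this
    exact (e.summable_iff (f := fun γ => ‖x γ‖ ^ (2:ℝ≥0∞).toReal)).2 this⟩
  invFun x := ⟨fun γ => x (e.symm γ), by
    apply memℓp_gen
    have := (lp.memℓp x)
    rw [memℓp_gen_iff (by norm_num)] at this
    exact (e.symm.summable_iff (f := fun γ => ‖x γ‖ ^ (2:ℝ≥0∞).toReal)).2 this⟩
  left_inv x := by ext γ; simp
  right_inv x := by ext γ; simp
  map_add' x y := by ext γ; simp [lp.coeFn_add]; rfl
  map_smul' c x := by ext γ; simp [lp.coeFn_smul]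
  norm_map' x := by
    rw [lp.norm_eq_tsum_rpow (by norm_num) _, lp.norm_eq_tsum_rpow (by norm_num) x]
    congr 1
    exact e.tsum_eq (fun γ => ‖x γ‖ ^ (2:ℝ≥0∞).toReal)

@[simp] lemma shift_apply (e : Δ ≃ Δ) (x : lp (fun _ : Δ => ℝ) 2) (γ : Δ) :
    (shift e x) γ = x (e γ) := rfl




variable {Δ : Type*} [Group Δ] [DecidableEq Δ]

local notation "H" => lp (fun _ : Δ => ℝ) 2

noncomputable def Lt (δ : Δ) : H ≃ₗᵢ[ℝ] H := shift (Equiv.mulLeft δ⁻¹)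
noncomputable def Rt (σ : Δ) : H ≃ₗᵢ[ℝ] H := shift (Equiv.mulRight σ)

@[simp] lemma Lt_apply (δ : Δ) (x : H) (γ : Δ) : (Lt δ x) γ = x (δ⁻¹ * γ) := rfl
@[simp] lemma Rt_apply (σ : Δ) (x : H) (γ : Δ) : (Rt σ x) γ = x (γ * σ) := rfl

noncomputable def LtC (δ : Δ) : H →L[ℝ] H :=
  (Lt δ).toLinearIsometry.toContinuousLinearMap

@[simp] lemma LtC_apply (δ : Δ) (x : H) (γ : Δ) : (LtC δ x) γ = x (δ⁻¹ * γ) := rfl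

variable (q : Δ → ℝ)

lemma summable_smul_LtC (hq : Summable fun δ => |q δ|) :
    Summable (fun δ => q δ • LtC (Δ := Δ) δ) := by
  apply Summable.of_norm
  apply Summable.of_nonneg_of_le (fun δ => norm_nonneg _) (fun δ => ?_) hq
  calc ‖q δ • LtC (Δ := Δ) δ‖ ≤ ‖q δ‖ * ‖LtC (Δ := Δ) δ‖ :=
        norm_smul_le (q δ) (LtC (Δ := Δ) δ)
    _ ≤ ‖q δ‖ * 1 := by
        gcongr
        exact (Lt (Δ := Δ) δ).toLinearIsometry.norm_toContinuousLinearMap_le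
    _ = |q δ| := by simp

noncomputable def Q (hq : Summable fun δ => |q δ|) : H →L[ℝ] H := ∑' δ, q δ • LtC δ

lemma Q_apply (hq : Summable fun δ => |q δ|) (x : H) :
    Q q hq x = ∑' δ, q δ • Lt δ x := by
  have h1 := (ContinuousLinearMap.apply ℝ H x).map_tsum (summable_smul_LtC q hq)
  simp only [ContinuousLinearMap.apply_apply, ContinuousLinearMap.smul_apply] at h1
  exact h1




lemma summable_smul_Lt (hq : Summable fun δ => |q δ|) (x : H) :
    Summable (fun δ => q δ • (Lt δ x : H)) := by
  apply Summable.of_norm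
  apply Summable.of_nonneg_of_le (fun δ => norm_nonneg _)
    (fun δ => ?_) (hq.mul_right ‖x‖)
  calc ‖q δ • (Lt δ x : H)‖ ≤ ‖q δ‖ * ‖(Lt δ x : H)‖ := norm_smul_le _ _
    _ = |q δ| * ‖x‖ := by rw [(Lt δ).norm_map]; simp

lemma Q_coord (hq : Summable fun δ => |q δ|) (x : H) (γ : Δ) :
    (Q q hq x) γ = ∑' δ, q δ * x (δ⁻¹ * γ) := by
  have h0 : (Q q hq x) γ = ⟪lp.single 2 γ (1:ℝ), Q q hq x⟫ := by
    rw [lp.inner_single_left]; simp [RCLike.inner_apply]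
  rw [h0, Q_apply]
  have h1 := (innerSL ℝ (lp.single 2 γ (1:ℝ))).map_tsum (summable_smul_Lt q hq x)
  simp only [innerSL_apply_apply] at h1 ⊢
  rw [h1]
  refine tsum_congr fun δ => ?_
  rw [inner_smul_right, lp.inner_single_left]
  simp [RCLike.inner_apply]


lemma Rt_Rt (σ τ : Δ) (x : H) : Rt σ (Rt τ x) = Rt (σ * τ) x := by
  apply lp.ext
  funext γ
  simp [mul_assoc]

lemma Rt_inv_Rt (σ : Δ) (x : H) : Rt σ⁻¹ (Rt σ x) = x := by
  rw [Rt_Rt]; apply lp.ext; funext γ; simp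

lemma inner_Rt (σ : Δ) (x y : H) : ⟪Rt σ x, Rt σ y⟫ = ⟪x, y⟫ :=
  (Rt σ).inner_map_map x y

/-- coordinates of `Q` as a convolution -/
lemma Q_conv (hq : Summable fun δ => |q δ|) (x : H) (γ : Δ) :
    (Q q hq x) γ = conv q (⇑x) γ := Q_coord q hq x γ

lemma coord_bound (x : H) : ∀ γ : Δ, |x γ| ≤ ‖x‖ := fun γ => by
  simpa [Real.norm_eq_abs] using lp.norm_apply_le_norm (by norm_num : (2:ℝ≥0∞) ≠ 0) x γ

/-- `Q` commutes with right translations -/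
lemma Q_Rt (hq : Summable fun δ => |q δ|) (σ : Δ) (x : H) :
    Q q hq (Rt σ x) = Rt σ (Q q hq x) := by
  apply lp.ext
  funext γ
  rw [Q_coord]
  have : (Rt σ (Q q hq x)) γ = (Q q hq x) (γ * σ) := rfl
  rw [this, Q_coord]
  exact tsum_congr fun δ => by rw [Rt_apply, mul_assoc]

/-- `Q` is idempotent when `q` is a convolution idempotent -/
lemma Q_idem (hq : Summable fun δ => |q δ|) (hqq : ∀ γ, conv q q γ = q γ) (x : H) :
    Q q hq (Q q hq x) = Q q hq x := by
  apply lp.ext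
  funext γ
  rw [Q_conv q hq, Q_conv q hq x γ]
  have h1 : conv q (⇑(Q q hq x)) γ = conv q (conv q (⇑x)) γ := by
    unfold conv
    refine tsum_congr fun δ => ?_
    rw [Q_conv q hq x]
    rfl
  rw [h1]
  have h2 := (conv_assoc q q hq hq (⇑x) (coord_bound x) γ).symm
  unfold conv at h2 ⊢
  rw [h2]
  exact tsum_congr fun τ => congrArg (fun t : ℝ => t * (x (τ⁻¹ * γ) : ℝ)) (hqq τ)

section Main
variable (hq : Summable fun δ => |q δ|) (hqq : ∀ γ, conv q q γ = q γ)

/-- the fixed space of `Q` -/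
noncomputable def KK (hq : Summable fun δ => |q δ|) : Submodule ℝ H :=
  LinearMap.ker (((ContinuousLinearMap.id ℝ H) - Q q hq : H →L[ℝ] H) : H →ₗ[ℝ] H)

lemma mem_KK_iff (x : H) : x ∈ KK q hq ↔ Q q hq x = x := by
  unfold KK
  rw [LinearMap.mem_ker]
  constructor
  · intro hx
    have : x - Q q hq x = 0 := by
      simpa using hx
    rw [sub_eq_zero] at this
    exact this.symm
  · intro hx
    have : x - Q q hq x = 0 := by rw [hx]; simp
    simpa using this

set_option synthInstance.maxHeartbeats 1000000 in
lemma isClosed_KK : IsClosed (KK q hq : Set H) :=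
  ContinuousLinearMap.isClosed_ker _

lemma Rt_mem_KK {x : H} (hx : x ∈ KK q hq) (σ : Δ) : Rt σ x ∈ KK q hq := by
  rw [mem_KK_iff] at hx ⊢
  rw [Q_Rt, hx]

lemma Rt_mem_KK_orth {z : H} (hz : z ∈ (KK q hq)ᗮ) (σ : Δ) : Rt σ z ∈ (KK q hq)ᗮ := by
  rw [Submodule.mem_orthogonal] at hz ⊢
  intro k hk
  have h1 : k = Rt σ (Rt σ⁻¹ k) := by
    rw [Rt_Rt]
    apply lp.ext; funext γ; simp
  rw [h1, inner_Rt]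
  exact hz _ (Rt_mem_KK q hq hk σ⁻¹)

end Main

section Zero
variable {Δ : Type*} [Group Δ] [DecidableEq Δ]
local notation "HH" => lp (fun _ : Δ => ℝ) 2

theorem q_eq_zero (q : Δ → ℝ) (hq : Summable fun δ => |q δ|)
    (hqq : ∀ γ, conv q q γ = q γ) (hq1 : q 1 = 0) : ∀ γ, q γ = 0 := by
  haveI : CompleteSpace (KK q hq) := (isClosed_KK q hq).completeSpace_coe
  set e1 : HH := lp.single 2 (1:Δ) (1:ℝ) with he1def
  have he1 : ∀ x : Δ, e1 x = if x = 1 then (1:ℝ) else 0 := by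
    intro x
    by_cases hx : x = 1
    · subst hx; simp [he1def, lp.single_apply_self]
    · simp [he1def, lp.single_apply_ne _ _ _ hx, hx]
  have hsingle : ∀ γ : Δ, (lp.single 2 γ (1:ℝ) : HH) = Rt γ⁻¹ e1 := by
    intro γ; apply lp.ext; funext x
    have h1 : (Rt γ⁻¹ e1 : HH) x = e1 (x * γ⁻¹) := rfl
    rw [h1, he1]
    by_cases hx : x = γ
    · subst hx; simp [lp.single_apply_self]
    · have h2 : ¬ (x * γ⁻¹ = 1) := by rwa [mul_inv_eq_one]
      simp [lp.single_apply_ne _ _ _ hx, h2, Pi.single_apply, hx]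
  have hcoordL : ∀ (z : HH) (γ : Δ), ⟪(lp.single 2 γ (1:ℝ) : HH), z⟫ = z γ := by
    intro z γ; rw [lp.inner_single_left]; simp [RCLike.inner_apply]
  have hcoordR : ∀ (z : HH) (γ : Δ), ⟪z, (lp.single 2 γ (1:ℝ) : HH)⟫ = z γ := by
    intro z γ; rw [lp.inner_single_right]; simp [RCLike.inner_apply]
  set u : HH := ((KK q hq).starProjection e1 : HH) with hu
  have humem : u ∈ KK q hq := Submodule.starProjection_apply_mem _ _
  have hm : e1 - u ∈ (KK q hq)ᗮ := Submodule.sub_starProjection_mem_orthogonal e1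
  have hprojRt : ∀ (σ : Δ) (x : HH),
      ((KK q hq).starProjection (Rt σ x) : HH)
        = Rt σ ((KK q hq).starProjection x) := by
    intro σ x
    apply Submodule.eq_starProjection_of_mem_orthogonal
    · exact Rt_mem_KK q hq (Submodule.starProjection_apply_mem _ _) σ
    · have h3 : Rt σ x - Rt σ ((KK q hq).starProjection x : HH)
          = Rt σ (x - ((KK q hq).starProjection x : HH)) := by
        rw [map_sub]
      rw [h3]
      exact Rt_mem_KK_orth q hq (Submodule.sub_starProjection_mem_orthogonal x) σ
  have husym : ∀ γ : Δ, u γ = u γ⁻¹ := by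
    intro γ
    have h1 : u γ = ⟪u, (lp.single 2 γ (1:ℝ) : HH)⟫ := (hcoordR u γ).symm
    rw [h1, hsingle, hu,
      Submodule.inner_starProjection_left_eq_right (KK q hq) e1 (Rt γ⁻¹ e1),
      hprojRt]
    have h2 : ⟪e1, Rt γ⁻¹ ((KK q hq).starProjection e1 : HH)⟫
        = (Rt γ⁻¹ u) 1 := by
      rw [he1def, hcoordL, hu]
    rw [h2]
    have h3 : (Rt γ⁻¹ u) 1 = u (1 * γ⁻¹) := rfl
    rw [h3, one_mul]
  have ht : ∀ γ : Δ, (Q q hq e1) γ = q γ := by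
    intro γ
    rw [Q_coord]
    rw [tsum_eq_single γ]
    · simp [he1]
    · intro δ hδ
      have h4 : ¬(δ⁻¹ * γ = 1) := by rw [inv_mul_eq_one]; exact hδ
      simp [he1, h4]
  have htmem : Q q hq e1 ∈ KK q hq := by
    rw [mem_KK_iff]; exact Q_idem q hq hqq e1
  have htu : ⟪Q q hq e1, u⟫ = 0 := by
    have hz : ⟪Q q hq e1, e1 - u⟫ = 0 :=
      Submodule.inner_right_of_mem_orthogonal htmem hm
    have hQe1 : ⟪Q q hq e1, e1⟫ = q 1 := by
      rw [he1def, hcoordR, ht]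
    have hsplit : ⟪Q q hq e1, e1⟫ = ⟪Q q hq e1, u⟫ + ⟪Q q hq e1, e1 - u⟫ := by
      rw [← inner_add_right, add_sub_cancel]
    rw [hQe1, hq1, hz, add_zero] at hsplit
    exact hsplit.symm
  have hu1 : u 1 = 0 := by
    have h1 : u 1 = (Q q hq u) 1 := by
      conv_lhs => rw [← (mem_KK_iff q hq u).1 humem]
    rw [h1, Q_coord]
    have h2 : ∀ δ : Δ, q δ * u (δ⁻¹ * 1) = q δ * u δ := fun δ => by
      rw [mul_one, ← husym δ]
    rw [tsum_congr h2]
    have h3 : ⟪Q q hq e1, u⟫ = ∑' δ, q δ * u δ := by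
      rw [lp.inner_eq_tsum]
      exact tsum_congr fun δ => by simp [RCLike.inner_apply, ht δ, mul_comm]
    rw [← h3, htu]
  have hu0 : u = 0 := by
    rw [← inner_self_eq_zero (𝕜 := ℝ) (x := u)]
    have h1 : ⟪u, e1⟫ = u 1 := by rw [he1def, hcoordR]
    have h2 : ⟪u, e1 - u⟫ = 0 := Submodule.inner_right_of_mem_orthogonal humem hm
    have h3 : ⟪u, u⟫ = ⟪u, e1⟫ - ⟪u, e1 - u⟫ := by
      rw [inner_sub_right]; ring
    rw [h3, h1, h2, hu1]; ring
  have he1orth : e1 ∈ (KK q hq)ᗮ := by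
    rw [hu0, sub_zero] at hm; exact hm
  have hsorth : ∀ γ : Δ, (lp.single 2 γ (1:ℝ) : HH) ∈ (KK q hq)ᗮ := fun γ => by
    rw [hsingle]; exact Rt_mem_KK_orth q hq he1orth γ⁻¹
  have ht0 : Q q hq e1 = 0 := by
    apply lp.ext; funext γ
    have h5 : (Q q hq e1) γ = ⟪Q q hq e1, (lp.single 2 γ (1:ℝ) : HH)⟫ :=
      (hcoordR _ γ).symm
    rw [h5, Submodule.inner_right_of_mem_orthogonal htmem (hsorth γ)]
    simp
  intro γ
  rw [← ht γ, ht0]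
  simp

end Zero

end Kap

open Kap in
/-- Kaplansky. The convolution algebra `ℓ¹(Δ,ℝ)` of a countable discrete
group `Δ` is directly finite: if `v·w = δ_e` for absolutely summable `v, w : Δ → ℝ`, then
`w·v = δ_e`. -/
theorem l1_directly_finite {Δ : Type*} [Group Δ] [Countable Δ] [DecidableEq Δ]
    (v w : Δ → ℝ)
    (hv : Summable fun δ => |v δ|) (hw : Summable fun δ => |w δ|)
    (h : ∀ γ : Δ, ∑' δ : Δ, v δ * w (δ⁻¹ * γ) = if γ = 1 then 1 else 0) :
    ∀ γ : Δ, ∑' δ : Δ, w δ * v (δ⁻¹ * γ) = if γ = 1 then 1 else 0 := by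
  have hvw : ∀ γ, conv v w γ = dlt γ := h
  set p : Δ → ℝ := conv w v with hpdef
  have hp : Summable fun γ => |p γ| := summable_conv w v hw hv
  -- v ⋆ (w ⋆ v) = v
  have hvp : ∀ γ, conv v p γ = v γ := by
    intro γ
    have ha := conv_assoc v w hv hw v (abs_le_tsum_abs v hv) γ
    have hL : ∑' τ, conv v w τ * v (τ⁻¹ * γ) = v γ := by
      rw [tsum_congr fun τ => by rw [hvw τ]]
      exact dlt_conv v γ
    rw [hL] at ha
    exact ha.symm
  -- p is idempotent
  have hpp : ∀ γ, conv p p γ = p γ := by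
    intro γ
    have ha := conv_assoc w v hw hv p (abs_le_tsum_abs p hp) γ
    have hR : ∑' δ, w δ * conv v p (δ⁻¹ * γ) = p γ := by
      rw [tsum_congr fun δ => by rw [hvp (δ⁻¹ * γ)]]
      rfl
    rw [hR] at ha
    exact ha
  -- p 1 = 1
  have hp1 : p 1 = 1 := by
    have h1 : p 1 = ∑' δ, w δ * v δ⁻¹ := by
      rw [hpdef]
      exact tsum_congr fun δ => by rw [mul_one]
    have h2 : ∑' δ : Δ, w δ⁻¹ * v δ = ∑' δ, w δ * v δ⁻¹ :=
      (Equiv.inv Δ).tsum_eq (fun δ => w δ * v δ⁻¹) |>.symm ▸ by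
        simpa using ((Equiv.inv Δ).tsum_eq (fun δ => w δ * v δ⁻¹))
    have h3 : ∑' δ : Δ, v δ * w (δ⁻¹ * 1) = 1 := by rw [h 1]; simp
    have h4 : ∑' δ : Δ, v δ * w (δ⁻¹ * 1) = ∑' δ : Δ, w δ⁻¹ * v δ :=
      tsum_congr fun δ => by rw [mul_one, mul_comm]
    rw [h1, ← h2, ← h4, h3]
  set q : Δ → ℝ := fun γ => dlt γ - p γ with hqdef
  have hq : Summable fun γ => |q γ| :=
    summable_abs_iff.2 (summable_dlt.sub (summable_abs_iff.1 hp))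
  have hq1 : q 1 = 0 := by
    rw [hqdef]; simp [dlt, hp1]
  have hqb := abs_le_tsum_abs q hq
  have hpb := abs_le_tsum_abs p hp
  -- q is idempotent
  have hqq : ∀ γ, conv q q γ = q γ := by
    intro γ
    have hpq : conv p q γ = 0 := by
      have hsplit : conv p q γ = conv p dlt γ - conv p p γ := by
        unfold conv
        rw [← Summable.tsum_sub (summable_sect p hp dlt dlt_bound γ)
          (summable_sect p hp p hpb γ)]
        exact tsum_congr fun δ => by rw [hqdef]; ring
      rw [hsplit, conv_dlt, hpp]
      ring
    have hsplit2 : conv q q γ = conv dlt q γ - conv p q γ := by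
      unfold conv
      rw [← Summable.tsum_sub (summable_sect dlt summable_dlt_abs q hqb γ)
        (summable_sect p hp q hqb γ)]
      exact tsum_congr fun δ => by rw [hqdef]; ring
    rw [hsplit2, dlt_conv, hpq]
    ring
  have hz := q_eq_zero q hq hqq hq1
  intro γ
  have h5 : p γ = dlt γ := by
    have h6 : dlt γ - p γ = 0 := hz γ
    linarith
  exact h5
end

section
/- Let Δ be a countable discrete group and let f ∈ ℤΔ be invertible in ℓ¹(Δ,ℝ) (equivalently, the principal algebraic Δ-action α_f is expansive). Then there exists g ∈ ℤΔ such that the product fg ∈ ℤΔ is lopsided, i.e., there is δ₀ ∈ Δ with |(fg)(δ₀)| > Σ_{δ≠δ₀} |(fg)(δ)|. -/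
open MeasureTheory Filter



/-- The additive circle `ℝ/ℤ`. -/
abbrev T1 : Type := AddCircle (1 : ℝ)

variable {Δ : Type*} [Group Δ]

/-- For `f` in the integral group ring `ℤΔ`, the closed shift-invariant subgroup
`X_f = { t ∈ (ℝ/ℤ)^Δ : ∑_δ f(δ) • t(θδ) = 0 for all θ }`. -/
noncomputable def Xf (f : MonoidAlgebra ℤ Δ) : AddSubgroup (Δ → T1) where
  carrier := {t | ∀ θ : Δ, ∑ δ ∈ f.coeff.support, f.coeff δ • t (θ * δ) = 0}
  zero_mem' := by intro θ; simp
  add_mem' := by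
    intro a b ha hb θ
    simp only [Pi.add_apply, smul_add, Finset.sum_add_distrib]
    rw [ha θ, hb θ, add_zero]
  neg_mem' := by
    intro a ha θ
    simp only [Pi.neg_apply, smul_neg]
    rw [Finset.sum_neg_distrib, ha θ, neg_zero]

/-- The left shift action: `(γ · t)(δ) = t(γ⁻¹ δ)`. -/
def shift (γ : Δ) (t : Δ → T1) : Δ → T1 := fun δ => t (γ⁻¹ * δ)

theorem shift_mem {f : MonoidAlgebra ℤ Δ} (γ : Δ) {t : Δ → T1} (ht : t ∈ Xf f) :
    shift γ t ∈ Xf f := by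
  intro θ
  simpa [shift, mul_assoc] using ht (γ⁻¹ * θ)

/-- The principal algebraic `Δ`-action `α_f` on `X_f`. -/
def shiftX (f : MonoidAlgebra ℤ Δ) (γ : Δ) : ↥(Xf f) → ↥(Xf f) :=
  fun t => ⟨shift γ t.1, shift_mem γ t.2⟩

variable [DecidableEq Δ]

/-- `w : Δ → ℝ` is a two-sided `ℓ¹`-inverse of `f ∈ ℤΔ`. -/
def IsL1Inverse (f : MonoidAlgebra ℤ Δ) (w : Δ → ℝ) : Prop :=
  Summable (fun δ => |w δ|) ∧
  (∀ γ : Δ, ∑ δ ∈ f.coeff.support, (f.coeff δ : ℝ) * w (δ⁻¹ * γ) = if γ = 1 then 1 else 0) ∧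
  (∀ γ : Δ, ∑ δ ∈ f.coeff.support, w (γ * δ⁻¹) * (f.coeff δ : ℝ) = if γ = 1 then 1 else 0)

/-- `f ∈ ℤΔ` is invertible in `ℓ¹(Δ,ℝ)`. -/
def L1Invertible (f : MonoidAlgebra ℤ Δ) : Prop :=
  ∃ w : Δ → ℝ, IsL1Inverse f w

/-- The principal algebraic `Δ`-action `α_f` is expansive: there is a neighborhood `U`
of `0` in `X_f` with `⋂_γ γ·U = {0}`. -/
def ExpansiveAction (f : MonoidAlgebra ℤ Δ) : Prop :=
  ∃ U : Set ↥(Xf f), U ∈ nhds 0 ∧ (⋂ γ : Δ, shiftX f γ '' U) = {0}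

/-- `f* ∈ ℤΔ`, given by `f*(δ) = f(δ⁻¹)`. -/
def fstar (f : MonoidAlgebra ℤ Δ) : MonoidAlgebra ℤ Δ :=
  MonoidAlgebra.ofCoeff (Finsupp.equivMapDomain (Equiv.inv Δ) f.coeff)

/-- The action `α_f` is mixing with respect to `μ`. -/
def MixingAction (f : MonoidAlgebra ℤ Δ) (μ : Measure ↥(Xf f)) : Prop :=
  ∀ E F : Set ↥(Xf f), MeasurableSet E → MeasurableSet F →
    Tendsto (fun γ : Δ => μ ((shiftX f γ '' E) ∩ F)) cofinite (nhds (μ E * μ F))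

set_option maxHeartbeats 2000000 in
/-- Purbhoo; H. Li. If `f ∈ ℤΔ` is invertible in `ℓ¹(Δ,ℝ)` (equivalently,
`α_f` is expansive), then there is a `g ∈ ℤΔ` such that `fg` is lopsided. -/
theorem exists_lopsided_multiple {Δ : Type*} [Group Δ] [Countable Δ] [DecidableEq Δ]
    (f : MonoidAlgebra ℤ Δ) (hf : L1Invertible f) :
    ∃ g : MonoidAlgebra ℤ Δ, ∃ δ₀ : Δ,
      ∑ δ ∈ (f * g).coeff.support.erase δ₀, |(f * g).coeff δ| < |(f * g).coeff δ₀| := by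
  obtain ⟨w, hsum, hl, -⟩ := hf
  have hne : f.coeff.support.Nonempty := by
    rw [Finset.nonempty_iff_ne_empty]
    intro h
    have := hl 1
    simp [h] at this
  set nf : ℝ := ∑ δ ∈ f.coeff.support, |(f.coeff δ : ℝ)| with hnf
  have hnfpos : 0 < nf :=
    Finset.sum_pos (fun δ hδ => abs_pos.mpr (by
      exact_mod_cast Finsupp.mem_support_iff.mp hδ)) hne
  set ε : ℝ := 1 / (8 * nf) with hεdef
  have hεpos : 0 < ε := by positivity
  obtain ⟨F, hF⟩ := summable_iff_vanishing.mp hsum (Set.Iio ε) (Iio_mem_nhds hεpos)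
  have htail : ∀ t : Finset Δ, Disjoint t F → ∑ a ∈ t, |w a| < ε := fun t ht => hF t ht
  set N : ℕ := ⌈nf * F.card⌉₊ + 1 with hNdef
  have hNpos : 0 < (N : ℝ) := by positivity
  have hNgt : nf * F.card < N := by
    calc nf * F.card ≤ (⌈nf * F.card⌉₊ : ℝ) := Nat.le_ceil _
    _ < N := by rw [hNdef]; push_cast; linarith
  set c : Δ → ℤ := fun a => round ((N : ℝ) * w a) with hc
  set g : MonoidAlgebra ℤ Δ := ∑ a ∈ F, MonoidAlgebra.single a (c a) with hg
  refine ⟨g, 1, ?_⟩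
  have hval : ∀ γ : Δ, ((f * g).coeff γ : ℝ) = ∑ a ∈ F, (f.coeff (γ * a⁻¹) : ℝ) * (c a : ℝ) := by
    intro γ
    rw [hg, Finset.mul_sum, MonoidAlgebra.coeff_sum, Finset.sum_apply']
    push_cast
    refine Finset.sum_congr rfl fun a _ => ?_
    rw [MonoidAlgebra.coeff_mul_single_apply]
    push_cast
    ring
  set d : Δ → ℝ := fun γ => ((f * g).coeff γ : ℝ) - N * (if γ = 1 then 1 else 0) with hd
  have hkey : ∀ γ : Δ, d γ = ∑ δ ∈ f.coeff.support,
      (if δ⁻¹ * γ ∈ F then (f.coeff δ : ℝ) * ((c (δ⁻¹ * γ) : ℝ) - N * w (δ⁻¹ * γ))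
       else -((N : ℝ) * ((f.coeff δ : ℝ) * w (δ⁻¹ * γ)))) := by
    intro γ
    have h1 : ∑ a ∈ F, (f.coeff (γ * a⁻¹) : ℝ) * (c a : ℝ)
        = ∑ δ ∈ f.coeff.support, (if δ⁻¹ * γ ∈ F then (f.coeff δ : ℝ) * (c (δ⁻¹ * γ) : ℝ) else 0) := by
      rw [← Finset.sum_filter]
      rw [← Finset.sum_filter_of_ne (s := F) (f := fun a => (f.coeff (γ * a⁻¹) : ℝ) * (c a : ℝ))
        (p := fun a => γ * a⁻¹ ∈ f.coeff.support) (fun a _ hne' => by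
          by_contra h
          simp only [Finsupp.mem_support_iff, not_not] at h
          simp [h] at hne')]
      refine Finset.sum_bij' (fun a _ => γ * a⁻¹) (fun δ _ => δ⁻¹ * γ) ?_ ?_ ?_ ?_ ?_
      · intro a ha
        simp only [Finset.mem_filter] at ha ⊢
        refine ⟨ha.2, ?_⟩
        have : (γ * a⁻¹)⁻¹ * γ = a := by group
        rw [this]; exact ha.1
      · intro δ hδ
        simp only [Finset.mem_filter] at hδ ⊢
        refine ⟨hδ.2, ?_⟩
        have : γ * (δ⁻¹ * γ)⁻¹ = δ := by group
        rw [this]; exact hδ.1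
      · intro a _; group
      · intro δ _; group
      · intro a _
        have h2 : (γ * a⁻¹)⁻¹ * γ = a := by group
        rw [h2]
    have h2 := hl γ
    rw [hd]
    simp only
    rw [hval γ, h1, ← h2, Finset.mul_sum, ← Finset.sum_sub_distrib]
    refine Finset.sum_congr rfl fun δ _ => ?_
    by_cases h : δ⁻¹ * γ ∈ F
    · simp only [h, if_true]; ring
    · simp only [h, if_false]; ring
  have hdb : ∀ γ : Δ, |d γ| ≤ ∑ δ ∈ f.coeff.support,
      (if δ⁻¹ * γ ∈ F then |(f.coeff δ : ℝ)| * (1 / 2)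
       else (N : ℝ) * (|(f.coeff δ : ℝ)| * |w (δ⁻¹ * γ)|)) := by
    intro γ
    rw [hkey γ]
    refine (Finset.abs_sum_le_sum_abs _ _).trans (Finset.sum_le_sum fun δ _ => ?_)
    by_cases h : δ⁻¹ * γ ∈ F
    · simp only [h, if_true]
      rw [abs_mul]
      refine mul_le_mul_of_nonneg_left ?_ (abs_nonneg _)
      have : (c (δ⁻¹ * γ) : ℝ) - (N : ℝ) * w (δ⁻¹ * γ)
          = -(((N : ℝ) * w (δ⁻¹ * γ)) - (round ((N : ℝ) * w (δ⁻¹ * γ)) : ℝ)) := by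
        rw [hc]; ring
      rw [this, abs_neg]
      exact abs_sub_round _
    · simp only [h, if_false]
      rw [abs_neg, abs_mul, abs_mul, Nat.abs_cast]
  set S := (f * g).coeff.support with hS
  set T := insert (1 : Δ) S with hT
  have hinner : ∀ δ ∈ f.coeff.support, (∑ γ ∈ T,
      (if δ⁻¹ * γ ∈ F then |(f.coeff δ : ℝ)| * (1 / 2)
       else (N : ℝ) * (|(f.coeff δ : ℝ)| * |w (δ⁻¹ * γ)|)))
      ≤ |(f.coeff δ : ℝ)| * ((F.card : ℝ) * (1 / 2)) + (N : ℝ) * (|(f.coeff δ : ℝ)| * ε) := by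
    intro δ _
    rw [Finset.sum_ite]
    have hb1 : ∑ _γ ∈ T.filter (fun γ => δ⁻¹ * γ ∈ F), |(f.coeff δ : ℝ)| * (1 / 2)
        ≤ |(f.coeff δ : ℝ)| * ((F.card : ℝ) * (1 / 2)) := by
      rw [Finset.sum_const, nsmul_eq_mul]
      have hcard : (T.filter (fun γ => δ⁻¹ * γ ∈ F)).card ≤ F.card := by
        refine Finset.card_le_card_of_injOn (fun γ => δ⁻¹ * γ) ?_ ?_
        · intro γ hγ; exact (Finset.mem_filter.mp hγ).2
        · intro x _ y _ hxy; exact mul_left_cancel hxy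
      calc ((T.filter (fun γ => δ⁻¹ * γ ∈ F)).card : ℝ) * (|(f.coeff δ : ℝ)| * (1 / 2))
          ≤ (F.card : ℝ) * (|(f.coeff δ : ℝ)| * (1 / 2)) := by
            refine mul_le_mul_of_nonneg_right ?_ (by positivity)
            exact_mod_cast hcard
        _ = |(f.coeff δ : ℝ)| * ((F.card : ℝ) * (1 / 2)) := by ring
    have hb2 : ∑ γ ∈ T.filter (fun γ => ¬(δ⁻¹ * γ ∈ F)),
        (N : ℝ) * (|(f.coeff δ : ℝ)| * |w (δ⁻¹ * γ)|)
        ≤ (N : ℝ) * (|(f.coeff δ : ℝ)| * ε) := by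
      have hrw : ∑ γ ∈ T.filter (fun γ => ¬(δ⁻¹ * γ ∈ F)), |w (δ⁻¹ * γ)|
          = ∑ a ∈ (T.filter (fun γ => ¬(δ⁻¹ * γ ∈ F))).image (fun γ => δ⁻¹ * γ), |w a| := by
        rw [Finset.sum_image (fun x _ y _ hxy => mul_left_cancel hxy)]
      have hdisj : Disjoint ((T.filter (fun γ => ¬(δ⁻¹ * γ ∈ F))).image (fun γ => δ⁻¹ * γ)) F := by
        rw [Finset.disjoint_left]
        intro a ha
        obtain ⟨γ, hγ, rfl⟩ := Finset.mem_image.mp ha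
        exact (Finset.mem_filter.mp hγ).2
      have htb := le_of_lt (htail _ hdisj)
      calc ∑ γ ∈ T.filter (fun γ => ¬(δ⁻¹ * γ ∈ F)), (N : ℝ) * (|(f.coeff δ : ℝ)| * |w (δ⁻¹ * γ)|)
          = (N : ℝ) * |(f.coeff δ : ℝ)| * ∑ γ ∈ T.filter (fun γ => ¬(δ⁻¹ * γ ∈ F)), |w (δ⁻¹ * γ)| := by
            rw [Finset.mul_sum]; refine Finset.sum_congr rfl fun γ _ => by ring
        _ ≤ (N : ℝ) * |(f.coeff δ : ℝ)| * ε := by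
            refine mul_le_mul_of_nonneg_left ?_ (by positivity)
            rw [hrw]; exact htb
        _ = (N : ℝ) * (|(f.coeff δ : ℝ)| * ε) := by ring
    linarith
  have hEbound : ∑ γ ∈ T, |d γ| ≤ nf * ((F.card : ℝ) * (1 / 2)) + (N : ℝ) * (nf * ε) := by
    calc ∑ γ ∈ T, |d γ| ≤ ∑ γ ∈ T, ∑ δ ∈ f.coeff.support,
        (if δ⁻¹ * γ ∈ F then |(f.coeff δ : ℝ)| * (1 / 2)
         else (N : ℝ) * (|(f.coeff δ : ℝ)| * |w (δ⁻¹ * γ)|)) := Finset.sum_le_sum fun γ _ => hdb γ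
      _ = ∑ δ ∈ f.coeff.support, ∑ γ ∈ T,
        (if δ⁻¹ * γ ∈ F then |(f.coeff δ : ℝ)| * (1 / 2)
         else (N : ℝ) * (|(f.coeff δ : ℝ)| * |w (δ⁻¹ * γ)|)) := Finset.sum_comm
      _ ≤ ∑ δ ∈ f.coeff.support,
          (|(f.coeff δ : ℝ)| * ((F.card : ℝ) * (1 / 2)) + (N : ℝ) * (|(f.coeff δ : ℝ)| * ε)) :=
            Finset.sum_le_sum hinner
      _ = nf * ((F.card : ℝ) * (1 / 2)) + (N : ℝ) * (nf * ε) := by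
          rw [Finset.sum_add_distrib, ← Finset.sum_mul, ← Finset.mul_sum, ← Finset.sum_mul,
            ← hnf]
  have hNε : (N : ℝ) * (nf * ε) = N / 8 := by
    rw [hεdef]; field_simp
  have hT1 : (1 : Δ) ∉ S.erase 1 := Finset.notMem_erase _ _
  have hTsum : ∑ γ ∈ T, |d γ| = |d 1| + ∑ γ ∈ S.erase 1, |d γ| := by
    have : T = insert 1 (S.erase 1) := by
      rw [hT]; ext x; simp only [Finset.mem_insert, Finset.mem_erase]; tauto
    rw [this, Finset.sum_insert hT1]
  have hdγ : ∀ γ ∈ S.erase 1, |d γ| = |((f * g).coeff γ : ℝ)| := by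
    intro γ hγ
    have hγ1 : γ ≠ 1 := (Finset.mem_erase.mp hγ).1
    simp [hd, hγ1]
  have hsum' : ∑ δ ∈ (f * g).coeff.support.erase 1, |((f * g).coeff δ : ℝ)| = ∑ γ ∈ S.erase 1, |d γ| :=
    Finset.sum_congr rfl fun γ hγ => (hdγ γ hγ).symm
  have h1b : (N : ℝ) - |d 1| ≤ |((f * g).coeff 1 : ℝ)| := by
    have heq : ((f * g).coeff 1 : ℝ) = d 1 + N := by simp [hd]
    have habs : |(N : ℝ)| ≤ |d 1 + (N : ℝ)| + |d 1| := by
      calc |(N : ℝ)| = |(d 1 + (N : ℝ)) + (-(d 1))| := by ring_nf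
        _ ≤ |d 1 + (N : ℝ)| + |(-(d 1))| := abs_add_le _ _
        _ = |d 1 + (N : ℝ)| + |d 1| := by rw [abs_neg]
    rw [heq]
    have : |(N : ℝ)| = (N : ℝ) := abs_of_pos hNpos
    linarith
  have hfinal : nf * ((F.card : ℝ) * (1 / 2)) + (N : ℝ) / 8 < N := by linarith
  have goalR : ∑ δ ∈ (f * g).coeff.support.erase 1, |((f * g).coeff δ : ℝ)| < |((f * g).coeff 1 : ℝ)| := by
    rw [hsum']
    have := abs_nonneg (d 1)
    linarith [hEbound, hTsum, h1b, hNε]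
  exact_mod_cast goalR
end

section
/- Let Δ be a finitely generated group with a finite symmetric generating set S (so S = S⁻¹ and S generates Δ), and for δ ∈ Δ let |δ|_S denote the word length of δ: the least n ≥ 0 such that δ is a product of n elements of S. Suppose f ∈ ℤΔ is invertible in ℓ¹(Δ,ℝ), with ℓ¹-inverse f⁻¹ : Δ → ℝ. Then there are constants C > 0 and 0 < r < 1 such that |f⁻¹(δ)| ≤ C·r^{|δ|_S} for all δ ∈ Δ. -/
open MeasureTheory Filter



variable {Δ : Type*} [Group Δ]

variable [DecidableEq Δ]

section AuxDecay
open Finset Pointwise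
set_option linter.unusedSectionVars false
set_option maxHeartbeats 1000000

/-- right convolution of an arbitrary function with a finitely supported one -/
noncomputable def rconv (w : Δ → ℝ) (q : MonoidAlgebra ℝ Δ) (γ : Δ) : ℝ :=
  ∑ δ ∈ q.coeff.support, w (γ * δ⁻¹) * q.coeff δ

lemma rconv_eq_sum_subset (w : Δ → ℝ) {q : MonoidAlgebra ℝ Δ} {T : Finset Δ}
    (hT : q.coeff.support ⊆ T) (γ : Δ) : rconv w q γ = ∑ δ ∈ T, w (γ * δ⁻¹) * q.coeff δ := by
  refine Finset.sum_subset hT (fun x _ hx => ?_)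
  rw [Finsupp.notMem_support_iff.mp hx, mul_zero]

lemma rconv_coe (p q : MonoidAlgebra ℝ Δ) (γ : Δ) :
    rconv p.coeff q γ = (p * q).coeff γ := by
  rw [MonoidAlgebra.coeff_mul_apply_right]; rfl

lemma rconv_one (w : Δ → ℝ) (γ : Δ) : rconv w (1 : MonoidAlgebra ℝ Δ) γ = w γ := by
  classical
  have h1 : (1 : MonoidAlgebra ℝ Δ).coeff.support ⊆ {1} := Finsupp.support_single_subset
  rw [rconv_eq_sum_subset w h1, Finset.sum_singleton]
  simp [MonoidAlgebra.one_def]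

lemma rconv_sub_right (w : Δ → ℝ) (p q : MonoidAlgebra ℝ Δ) (γ : Δ) :
    rconv w (p - q) γ = rconv w p γ - rconv w q γ := by
  classical
  set T := (p - q).coeff.support ∪ p.coeff.support ∪ q.coeff.support with hT
  have h1 : (p - q).coeff.support ⊆ T := (Finset.subset_union_left).trans Finset.subset_union_left
  have h2 : p.coeff.support ⊆ T := (Finset.subset_union_right).trans Finset.subset_union_left
  have h3 : q.coeff.support ⊆ T := Finset.subset_union_right
  rw [rconv_eq_sum_subset w h1 γ, rconv_eq_sum_subset w h2 γ, rconv_eq_sum_subset w h3 γ,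
      ← Finset.sum_sub_distrib]
  refine Finset.sum_congr rfl fun x _ => ?_
  rw [MonoidAlgebra.coeff_sub, Finsupp.sub_apply]; ring

lemma rconv_sub_left (w v : Δ → ℝ) (q : MonoidAlgebra ℝ Δ) (γ : Δ) :
    rconv (fun x => w x - v x) q γ = rconv w q γ - rconv v q γ := by
  unfold rconv
  rw [← Finset.sum_sub_distrib]
  exact Finset.sum_congr rfl fun x _ => by ring

lemma rconv_assoc (w : Δ → ℝ) (p q : MonoidAlgebra ℝ Δ) (γ : Δ) :
    rconv w (p * q) γ = rconv (rconv w p) q γ := by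
  classical
  rw [rconv_eq_sum_subset w (MonoidAlgebra.support_coeff_mul_subset p q) γ]
  have lhs : ∑ c ∈ p.coeff.support * q.coeff.support, w (γ * c⁻¹) * (p * q).coeff c
      = ∑ c ∈ p.coeff.support * q.coeff.support, ∑ a ∈ p.coeff.support, ∑ b ∈ q.coeff.support,
          (if a * b = c then w (γ * c⁻¹) * (p.coeff a * q.coeff b) else 0) := by
    refine Finset.sum_congr rfl fun c _ => ?_
    rw [MonoidAlgebra.coeff_mul]
    unfold Finsupp.sum
    rw [Finset.mul_sum]
    refine Finset.sum_congr rfl fun a _ => ?_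
    rw [Finset.mul_sum]
    refine Finset.sum_congr rfl fun b _ => ?_
    rw [mul_ite, mul_zero]
  rw [lhs, Finset.sum_comm]
  have : ∀ a ∈ p.coeff.support, (∑ c ∈ p.coeff.support * q.coeff.support, ∑ b ∈ q.coeff.support,
      (if a * b = c then w (γ * c⁻¹) * (p.coeff a * q.coeff b) else 0))
      = ∑ b ∈ q.coeff.support, w (γ * (a*b)⁻¹) * (p.coeff a * q.coeff b) := by
    intro a ha
    rw [Finset.sum_comm]
    refine Finset.sum_congr rfl fun b hb => ?_
    rw [Finset.sum_ite_eq (p.coeff.support * q.coeff.support) (a*b) (fun c => w (γ * c⁻¹) * (p.coeff a * q.coeff b)),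
        if_pos (Finset.mul_mem_mul ha hb)]
  rw [Finset.sum_congr rfl this]
  unfold rconv
  rw [Finset.sum_comm]
  refine Finset.sum_congr rfl fun b _ => ?_
  rw [Finset.sum_mul]
  refine Finset.sum_congr rfl fun a _ => ?_
  have : γ * (a * b)⁻¹ = γ * b⁻¹ * a⁻¹ := by group
  rw [this]; ring

variable {Δ : Type*} [Group Δ] [DecidableEq Δ]

noncomputable def nrm (p : MonoidAlgebra ℝ Δ) : ℝ := ∑ δ ∈ p.coeff.support, |p.coeff δ|

lemma nrm_nonneg (p : MonoidAlgebra ℝ Δ) : 0 ≤ nrm p :=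
  Finset.sum_nonneg fun _ _ => abs_nonneg _

lemma nrm_eq_sum_subset {p : MonoidAlgebra ℝ Δ} {T : Finset Δ} (hT : p.coeff.support ⊆ T) :
    nrm p = ∑ δ ∈ T, |p.coeff δ| := by
  refine Finset.sum_subset hT fun x _ hx => ?_
  rw [Finsupp.notMem_support_iff.mp hx, abs_zero]

lemma nrm_mul_le (p q : MonoidAlgebra ℝ Δ) : nrm (p * q) ≤ nrm p * nrm q := by
  rw [nrm_eq_sum_subset (MonoidAlgebra.support_coeff_mul_subset p q)]
  have step1 : ∀ c ∈ p.coeff.support * q.coeff.support, |(p * q).coeff c| ≤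
      ∑ a ∈ p.coeff.support, ∑ b ∈ q.coeff.support, (if a * b = c then |p.coeff a| * |q.coeff b| else 0) := by
    intro c _
    rw [MonoidAlgebra.coeff_mul]
    unfold Finsupp.sum
    refine (Finset.abs_sum_le_sum_abs _ _).trans ?_
    refine Finset.sum_le_sum fun a _ => ?_
    refine (Finset.abs_sum_le_sum_abs _ _).trans ?_
    refine Finset.sum_le_sum fun b _ => ?_
    simp only []
    rcases eq_or_ne (a * b) c with h | h
    · rw [if_pos h, if_pos h, abs_mul]
    · rw [if_neg h, if_neg h, abs_zero]
  refine (Finset.sum_le_sum step1).trans ?_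
  rw [Finset.sum_comm]
  have : ∀ a ∈ p.coeff.support, (∑ c ∈ p.coeff.support * q.coeff.support, ∑ b ∈ q.coeff.support,
      (if a * b = c then |p.coeff a| * |q.coeff b| else 0)) ≤ ∑ b ∈ q.coeff.support, |p.coeff a| * |q.coeff b| := by
    intro a ha
    rw [Finset.sum_comm]
    refine Finset.sum_le_sum fun b hb => ?_
    rw [Finset.sum_ite_eq (p.coeff.support * q.coeff.support) (a*b) (fun _ => |p.coeff a| * |q.coeff b|),
        if_pos (Finset.mul_mem_mul ha hb)]
  refine (Finset.sum_le_sum this).trans ?_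
  rw [nrm, nrm, Finset.sum_mul]
  exact le_of_eq (Finset.sum_congr rfl fun a _ => by rw [Finset.mul_sum])

lemma nrm_pow_le {p : MonoidAlgebra ℝ Δ} {θ : ℝ} (hθ : 0 ≤ θ) (h : nrm p ≤ θ) (n : ℕ) :
    nrm (p ^ n) ≤ θ ^ n := by
  induction n with
  | zero =>
    simp only [pow_zero]
    have : nrm (1 : MonoidAlgebra ℝ Δ) ≤ 1 := by
      have : (1 : MonoidAlgebra ℝ Δ).coeff.support ⊆ {1} := Finsupp.support_single_subset
      rw [nrm_eq_sum_subset this, Finset.sum_singleton]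
      simp [MonoidAlgebra.one_def]
    simpa using this
  | succ n ih =>
    rw [pow_succ, pow_succ]
    calc nrm (p ^ n * p) ≤ nrm (p ^ n) * nrm p := nrm_mul_le _ _
    _ ≤ θ ^ n * θ := mul_le_mul ih h (nrm_nonneg _) (pow_nonneg hθ n)

/- word length -/
noncomputable def wl (S : Finset Δ) (δ : Δ) : ℕ :=
  sInf {n : ℕ | ∃ L : List Δ, L.length = n ∧ (∀ s ∈ L, s ∈ S) ∧ L.prod = δ}

lemma wl_set_nonempty (S : Finset Δ) (hsymm : ∀ s ∈ S, s⁻¹ ∈ S)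
    (hgen : Subgroup.closure (S : Set Δ) = ⊤) (δ : Δ) :
    {n : ℕ | ∃ L : List Δ, L.length = n ∧ (∀ s ∈ L, s ∈ S) ∧ L.prod = δ}.Nonempty := by
  have hδ : δ ∈ Subgroup.closure (S : Set Δ) := by rw [hgen]; trivial
  have : ∃ L : List Δ, (∀ s ∈ L, s ∈ S) ∧ L.prod = δ := by
    induction hδ using Subgroup.closure_induction with
    | mem x hx => exact ⟨[x], by simpa using hx, by simp⟩
    | one => exact ⟨[], by simp, by simp⟩
    | mul x y _ _ ihx ihy =>
      obtain ⟨L1, h1, h1p⟩ := ihx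
      obtain ⟨L2, h2, h2p⟩ := ihy
      refine ⟨L1 ++ L2, ?_, by rw [List.prod_append, h1p, h2p]⟩
      intro s hs
      rcases List.mem_append.mp hs with h | h
      exacts [h1 s h, h2 s h]
    | inv x _ ihx =>
      obtain ⟨L, h1, h1p⟩ := ihx
      refine ⟨(L.map fun x => x⁻¹).reverse, ?_, ?_⟩
      · intro s hs
        rw [List.mem_reverse, List.mem_map] at hs
        obtain ⟨a, ha, rfl⟩ := hs
        exact hsymm a (h1 a ha)
      · rw [← List.prod_inv_reverse, h1p]
  obtain ⟨L, h1, h2⟩ := this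
  exact ⟨L.length, L, rfl, h1, h2⟩

lemma wl_add (S : Finset Δ) (hsymm : ∀ s ∈ S, s⁻¹ ∈ S)
    (hgen : Subgroup.closure (S : Set Δ) = ⊤) (a b : Δ) :
    wl S (a * b) ≤ wl S a + wl S b := by
  obtain ⟨La, hLa, hLas, hLap⟩ := Nat.sInf_mem (wl_set_nonempty S hsymm hgen a)
  obtain ⟨Lb, hLb, hLbs, hLbp⟩ := Nat.sInf_mem (wl_set_nonempty S hsymm hgen b)
  refine Nat.sInf_le ⟨La ++ Lb, ?_, ?_, ?_⟩
  · rw [List.length_append, hLa, hLb]; rfl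
  · intro s hs; rcases List.mem_append.mp hs with h | h; exacts [hLas s h, hLbs s h]
  · rw [List.prod_append, hLap, hLbp]

lemma wl_one_eq_zero (S : Finset Δ) : wl S (1 : Δ) = 0 :=
  Nat.le_zero.mp (Nat.sInf_le ⟨[], rfl, by simp, by simp⟩)

lemma pow_supp_bound (S : Finset Δ) (hsymm : ∀ s ∈ S, s⁻¹ ∈ S)
    (hgen : Subgroup.closure (S : Set Δ) = ⊤) (g : MonoidAlgebra ℝ Δ)
    (k : ℕ) : ∀ δ ∈ (g ^ k).coeff.support, wl S δ ≤ k * (g.coeff.support.sup (wl S)) := by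
  induction k with
  | zero =>
    intro δ hδ
    rw [pow_zero] at hδ
    have : δ ∈ ({1} : Finset Δ) := Finsupp.support_single_subset hδ
    rw [Finset.mem_singleton] at this
    subst this
    simp [wl_one_eq_zero]
  | succ k ih =>
    intro δ hδ
    rw [pow_succ] at hδ
    obtain ⟨x, hx, y, hy, rfl⟩ := Finset.mem_mul.mp (MonoidAlgebra.support_coeff_mul_subset _ _ hδ)
    calc wl S (x * y) ≤ wl S x + wl S y := wl_add S hsymm hgen x y
    _ ≤ k * (g.coeff.support.sup (wl S)) + g.coeff.support.sup (wl S) :=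
        add_le_add (ih x hx) (Finset.le_sup hy)
    _ = (k + 1) * (g.coeff.support.sup (wl S)) := by ring


end AuxDecay

/-- If `f ∈ ℤΔ` is invertible in `ℓ¹(Δ,ℝ)` for a finitely generated group
`Δ` with finite symmetric generating set `S`, then the coefficients of `f⁻¹` decay
exponentially fast in the word length `|δ|_S`. -/
theorem l1_inverse_exponential_decay {Δ : Type*} [Group Δ] [Countable Δ] [DecidableEq Δ]
    (S : Finset Δ) (hsymm : ∀ s ∈ S, s⁻¹ ∈ S) (hgen : Subgroup.closure (S : Set Δ) = ⊤)
    (f : MonoidAlgebra ℤ Δ) (w : Δ → ℝ) (hw : IsL1Inverse f w) :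
    ∃ C : ℝ, 0 < C ∧ ∃ r : ℝ, 0 < r ∧ r < 1 ∧ ∀ δ : Δ,
      |w δ| ≤ C * r ^ sInf {n : ℕ |
        ∃ L : List Δ, L.length = n ∧ (∀ s ∈ L, s ∈ S) ∧ L.prod = δ} := by
  obtain ⟨hsum, hleft, hright⟩ := hw
  -- real coefficient version of f
  set fR : MonoidAlgebra ℝ Δ := MonoidAlgebra.ofCoeff (Finsupp.mapRange (Int.cast) Int.cast_zero f.coeff) with hfRdef
  have hfRsupp : fR.coeff.support = f.coeff.support :=
    Finsupp.support_mapRange_of_injective Int.cast_zero f.coeff Int.cast_injective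
  have hfRapp : ∀ δ, fR.coeff δ = (f.coeff δ : ℝ) := fun δ => Finsupp.mapRange_apply (hf := Int.cast_zero)
  -- the ℓ¹ norm of w
  set W : ℝ := ∑' δ, |w δ| with hWdef
  have hW0 : 0 ≤ W := tsum_nonneg fun _ => abs_nonneg _
  have hWb : ∀ δ, |w δ| ≤ W := fun δ => Summable.le_tsum hsum δ fun _ _ => abs_nonneg _
  set Nf : ℝ := nrm fR with hNfdef
  have hNf0 : 0 ≤ Nf := nrm_nonneg fR
  set ε : ℝ := 1 / (2 * (Nf + 1)) with hεdef
  have hε : 0 < ε := by positivity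
  -- truncation
  obtain ⟨F, hF⟩ := (summable_iff_vanishing.mp hsum) (Set.Iio ε) (Iio_mem_nhds hε)
  set u : MonoidAlgebra ℝ Δ :=
    MonoidAlgebra.ofCoeff (Finsupp.onFinset F (fun δ => if δ ∈ F then w δ else 0)
      (fun δ h => by by_contra hc; simp [hc] at h)) with hudef
  have husupp : u.coeff.support ⊆ F :=
    Finsupp.support_onFinset_subset (hf := fun δ h => by by_contra hc; simp [hc] at h)
  have huapp : ∀ δ, u.coeff δ = if δ ∈ F then w δ else 0 := fun δ => rfl
  set g : MonoidAlgebra ℝ Δ := 1 - fR * u with hgdef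
  -- the key identity : rconv w g = w - u
  have hwf : rconv w fR = fun γ => if γ = 1 then 1 else 0 := by
    funext γ
    show ∑ δ ∈ fR.coeff.support, w (γ * δ⁻¹) * fR.coeff δ = _
    rw [hfRsupp]
    rw [← hright γ]
    exact Finset.sum_congr rfl fun δ _ => by rw [hfRapp]
  have hkey : ∀ γ, rconv w g γ = w γ - u.coeff γ := by
    intro γ
    rw [hgdef, rconv_sub_right, rconv_one, rconv_assoc, hwf]
    have : rconv (fun γ => if γ = 1 then (1:ℝ) else 0) u γ = u.coeff γ := by
      show ∑ δ ∈ u.coeff.support, (if γ * δ⁻¹ = 1 then (1:ℝ) else 0) * u.coeff δ = u.coeff γ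
      have : ∀ δ ∈ u.coeff.support, (if γ * δ⁻¹ = 1 then (1:ℝ) else 0) * u.coeff δ
          = if δ = γ then u.coeff δ else 0 := by
        intro δ _
        have hc : (γ * δ⁻¹ = 1) ↔ (δ = γ) := by
          rw [mul_inv_eq_one]; exact eq_comm
        rcases eq_or_ne δ γ with h | h
        · rw [if_pos (hc.mpr h), if_pos h, one_mul]
        · rw [if_neg (fun hh => h (hc.mp hh)), if_neg h, zero_mul]
      rw [Finset.sum_congr rfl this, Finset.sum_ite_eq' u.coeff.support γ u.coeff]
      split
      · rfl
      · next h => exact (Finsupp.notMem_support_iff.mp h).symm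
    rw [this]
  -- norm bound for g
  have hgsmall : nrm g ≤ 1 / 2 := by
    have hgapp : ∀ γ, g.coeff γ = ∑ a ∈ f.coeff.support, (f.coeff a : ℝ) * (w (a⁻¹ * γ) - u.coeff (a⁻¹ * γ)) := by
      intro γ
      have h1 : (1 : MonoidAlgebra ℝ Δ).coeff γ = if γ = 1 then 1 else 0 := by
        rw [MonoidAlgebra.one_def, MonoidAlgebra.coeff_single, Finsupp.single_apply]
        simp [eq_comm]
      have h2 : (fR * u).coeff γ = ∑ a ∈ f.coeff.support, (f.coeff a : ℝ) * u.coeff (a⁻¹ * γ) := by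
        rw [MonoidAlgebra.coeff_mul_apply_left]
        unfold Finsupp.sum
        rw [hfRsupp]
        exact Finset.sum_congr rfl fun a _ => by rw [hfRapp]
      rw [hgdef, MonoidAlgebra.coeff_sub, Finsupp.sub_apply, h1, h2, ← hleft γ, ← Finset.sum_sub_distrib]
      exact Finset.sum_congr rfl fun a _ => by ring
    have step : ∀ a ∈ f.coeff.support, ∑ γ ∈ g.coeff.support, |w (a⁻¹ * γ) - u.coeff (a⁻¹ * γ)| ≤ ε := by
      intro a _
      have hinj : Set.InjOn (fun γ => a⁻¹ * γ) g.coeff.support := fun x _ y _ h => by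
        simpa using h
      rw [← Finset.sum_image (f := fun β => |w β - u.coeff β|) hinj]
      set T := g.coeff.support.image (fun γ => a⁻¹ * γ) with hTdef
      have hzero : ∀ β ∈ T, β ∈ F → |w β - u.coeff β| = 0 := by
        intro β _ hβ
        rw [huapp, if_pos hβ, sub_self, abs_zero]
      have : ∑ β ∈ T, |w β - u.coeff β| = ∑ β ∈ T \ F, |w β - u.coeff β| := by
        rw [Finset.sum_subset (Finset.sdiff_subset)]
        intro x hx hx2
        exact hzero x hx (by by_contra hc; exact hx2 (Finset.mem_sdiff.mpr ⟨hx, hc⟩))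
      rw [this]
      have heq : ∀ β ∈ T \ F, |w β - u.coeff β| = |w β| := by
        intro β hβ
        rw [huapp, if_neg (Finset.mem_sdiff.mp hβ).2, sub_zero]
      rw [Finset.sum_congr rfl heq]
      exact le_of_lt (hF (T \ F) (Finset.sdiff_disjoint))
    calc nrm g = ∑ γ ∈ g.coeff.support, |g.coeff γ| := rfl
    _ ≤ ∑ γ ∈ g.coeff.support, ∑ a ∈ f.coeff.support, |(f.coeff a : ℝ)| * |w (a⁻¹ * γ) - u.coeff (a⁻¹ * γ)| := by
        refine Finset.sum_le_sum fun γ _ => ?_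
        rw [hgapp γ]
        refine (Finset.abs_sum_le_sum_abs _ _).trans ?_
        exact Finset.sum_le_sum fun a _ => by rw [abs_mul]
    _ = ∑ a ∈ f.coeff.support, |(f.coeff a : ℝ)| * ∑ γ ∈ g.coeff.support, |w (a⁻¹ * γ) - u.coeff (a⁻¹ * γ)| := by
        rw [Finset.sum_comm]
        exact Finset.sum_congr rfl fun a _ => by rw [Finset.mul_sum]
    _ ≤ ∑ a ∈ f.coeff.support, |(f.coeff a : ℝ)| * ε := by
        refine Finset.sum_le_sum fun a ha => ?_
        exact mul_le_mul_of_nonneg_left (step a ha) (abs_nonneg _)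
    _ = Nf * ε := by
        rw [← Finset.sum_mul]
        congr 1
        rw [hNfdef, nrm_eq_sum_subset (le_of_eq hfRsupp)]
        exact Finset.sum_congr rfl fun a _ => by rw [hfRapp]
    _ ≤ 1 / 2 := by
        rw [hεdef, mul_one_div, div_le_div_iff₀ (by positivity) (by norm_num)]
        nlinarith
  -- iteration identity
  have hiter : ∀ n γ, w γ =
      (∑ k ∈ Finset.range n, (u * g ^ k : MonoidAlgebra ℝ Δ).coeff γ) + rconv w (g ^ n) γ := by
    intro n
    induction n with
    | zero => intro γ; simp [rconv_one]
    | succ n ih =>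
      intro γ
      have : rconv w (g ^ (n + 1)) γ = rconv w (g ^ n) γ - (u * g ^ n).coeff γ := by
        rw [pow_succ']
        rw [rconv_assoc]
        have hfun : rconv w g = fun x => w x - u.coeff x := funext fun x => hkey x
        rw [hfun, rconv_sub_left, rconv_coe]
      rw [Finset.sum_range_succ, this, ih γ]
      ring
  -- bound on the tail
  have htail : ∀ n γ, |rconv w (g ^ n) γ| ≤ W * (1 / 2) ^ n := by
    intro n γ
    calc |rconv w (g ^ n) γ| ≤ ∑ δ ∈ (g ^ n).coeff.support, |w (γ * δ⁻¹)| * |(g ^ n).coeff δ| := by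
          rw [rconv]
          refine (Finset.abs_sum_le_sum_abs _ _).trans ?_
          exact Finset.sum_le_sum fun δ _ => by rw [abs_mul]
    _ ≤ ∑ δ ∈ (g ^ n).coeff.support, W * |(g ^ n).coeff δ| :=
        Finset.sum_le_sum fun δ _ => mul_le_mul_of_nonneg_right (hWb _) (abs_nonneg _)
    _ = W * nrm (g ^ n) := by rw [← Finset.mul_sum]; rfl
    _ ≤ W * (1 / 2) ^ n :=
        mul_le_mul_of_nonneg_left (nrm_pow_le (by norm_num) hgsmall n) hW0
  -- word length support bounds
  set ℓ : Δ → ℕ := wl S with hℓdef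
  set Lu : ℕ := u.coeff.support.sup ℓ with hLudef
  set Lg : ℕ := g.coeff.support.sup ℓ with hLgdef
  have hsupp : ∀ k : ℕ, ∀ δ ∈ (u * g ^ k : MonoidAlgebra ℝ Δ).coeff.support, ℓ δ ≤ Lu + k * Lg := by
    intro k δ hδ
    obtain ⟨x, hx, y, hy, rfl⟩ := Finset.mem_mul.mp (MonoidAlgebra.support_coeff_mul_subset _ _ hδ)
    calc ℓ (x * y) ≤ ℓ x + ℓ y := wl_add S hsymm hgen x y
    _ ≤ Lu + k * Lg := add_le_add (Finset.le_sup hx) (pow_supp_bound S hsymm hgen g k y hy)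
  set M : ℕ := Lu + Lg + 1 with hMdef
  have hM0 : 0 < M := by omega
  -- the decay rate
  set r : ℝ := (2⁻¹ : ℝ) ^ ((M : ℝ)⁻¹) with hrdef
  have hr0 : 0 < r := Real.rpow_pos_of_pos (by norm_num) _
  have hr1 : r < 1 := Real.rpow_lt_one (by norm_num) (by norm_num) (by positivity)
  have hrM : r ^ M = 1 / 2 := by
    rw [hrdef, ← Real.rpow_natCast ((2⁻¹ : ℝ) ^ ((M : ℝ)⁻¹)) M,
        ← Real.rpow_mul (by norm_num), inv_mul_cancel₀ (Nat.cast_ne_zero.mpr (by omega)),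
        Real.rpow_one]
    norm_num
  refine ⟨2 * W + 1, by positivity, r, hr0, hr1, ?_⟩
  intro δ
  set m : ℕ := sInf {n : ℕ | ∃ L : List Δ, L.length = n ∧ (∀ s ∈ L, s ∈ S) ∧ L.prod = δ}
    with hmdef
  have hmℓ : m = ℓ δ := rfl
  set n : ℕ := m / M with hndef
  -- all the terms of the finite sum vanish
  have hvanish : ∀ k ∈ Finset.range n, (u * g ^ k : MonoidAlgebra ℝ Δ).coeff δ = 0 := by
    intro k hk
    rw [Finset.mem_range] at hk
    by_contra hc
    have hδ : δ ∈ (u * g ^ k : MonoidAlgebra ℝ Δ).coeff.support := Finsupp.mem_support_iff.mpr hc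
    have h1 : ℓ δ ≤ Lu + k * Lg := hsupp k δ hδ
    have h2 : n * M ≤ m := Nat.div_mul_le_self m M
    have h3 : Lu + k * Lg < n * M := by
      have hk1 : k + 1 ≤ n := hk
      calc Lu + k * Lg < (k + 1) * (Lu + Lg + 1) := by nlinarith
      _ ≤ n * (Lu + Lg + 1) := Nat.mul_le_mul_right _ hk1
    omega
  have hwδ : |w δ| ≤ W * (1 / 2) ^ n := by
    have := hiter n δ
    rw [Finset.sum_eq_zero hvanish, zero_add] at this
    rw [this]
    exact htail n δ
  -- convert the bound
  have hMn : m - M ≤ M * n := by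
    have h1 := Nat.div_add_mod m M
    have h2 := Nat.mod_lt m hM0
    rw [hndef]
    omega
  have hhalf : (1 / 2 : ℝ) ^ n ≤ 2 * r ^ m := by
    have e1 : (1 / 2 : ℝ) ^ n = r ^ (M * n) := by rw [pow_mul, hrM]
    have e2 : r ^ (M * n) ≤ r ^ (m - M) :=
      pow_le_pow_of_le_one (le_of_lt hr0) (le_of_lt hr1) hMn
    have e3 : r ^ (m - M) ≤ 2 * r ^ m := by
      rcases le_or_gt M m with h | h
      · have : r ^ m = r ^ (m - M) * r ^ M := by
          rw [← pow_add]
          congr 1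
          omega
        rw [this, hrM]
        nlinarith [pow_pos hr0 (m - M)]
      · have hm : m - M = 0 := by omega
        rw [hm, pow_zero]
        have : r ^ M ≤ r ^ m := pow_le_pow_of_le_one (le_of_lt hr0) (le_of_lt hr1) (by omega)
        rw [hrM] at this
        nlinarith
    rw [e1]
    exact e2.trans e3
  calc |w δ| ≤ W * (1 / 2) ^ n := hwδ
  _ ≤ W * (2 * r ^ m) := mul_le_mul_of_nonneg_left hhalf hW0
  _ ≤ (2 * W + 1) * r ^ m := by nlinarith [pow_pos hr0 m]
end

section
/- Suppose ζ ∈ ℂ with |ζ| = 1 is not a root of unity, and there are constants C > 0 and 0 < r < 1 such that |ζ^n − 1| ≥ C·r^n for all n ≥ 1. If κ ∈ ℂ with |κ| < r, then the function ξ ↦ log|1 − ξκ| on S¹ is a continuous coboundary for rotation by ζ: there exists a continuous function b : S¹ → ℝ such that log|1 − ξκ| = b(ξζ) − b(ξ) for all ξ ∈ S¹. -/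
/-- If `ζ ∈ S¹` is not a root of unity and satisfies the Diophantine
condition `|ζ^n − 1| ≥ C·rⁿ`, then for `|κ| < r` the function `ξ ↦ log|1 − ξκ|` on `S¹` is a
continuous coboundary for the rotation by `ζ`. -/
theorem log_coboundary_of_diophantine
    (ζ : ℂ) (hζ : ‖ζ‖ = 1) (hirr : ∀ n : ℕ, 1 ≤ n → ζ ^ n ≠ 1)
    (C r : ℝ) (hC : 0 < C) (hr0 : 0 < r) (hr1 : r < 1)
    (hdio : ∀ n : ℕ, 1 ≤ n → C * r ^ n ≤ ‖ζ ^ n - 1‖)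
    (κ : ℂ) (hκ : ‖κ‖ < r) :
    ∃ b : ℂ → ℝ, ContinuousOn b {ξ : ℂ | ‖ξ‖ = 1} ∧
      ∀ ξ : ℂ, ‖ξ‖ = 1 →
        Real.log ‖1 - ξ * κ‖ = b (ξ * ζ) - b ξ := by
  set term : ℕ → ℂ → ℂ := fun n ξ => ξ ^ n * κ ^ n / (n * (ζ ^ n - 1)) with hterm
  set u : ℕ → ℝ := fun n => C⁻¹ * (‖κ‖ / r) ^ n with hu
  have hκ0 : 0 ≤ ‖κ‖ := norm_nonneg κ
  have ha1 : ‖κ‖ / r < 1 := (div_lt_one hr0).2 hκ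
  have ha0 : 0 ≤ ‖κ‖ / r := div_nonneg hκ0 hr0.le
  have hSu : Summable u := (summable_geometric_of_lt_one ha0 ha1).mul_left _
  have hbound : ∀ (n : ℕ) (ξ : ℂ), ‖ξ‖ ≤ 1 → ‖term n ξ‖ ≤ u n := by
    intro n ξ hξ
    rcases Nat.eq_zero_or_pos n with rfl | hn
    · simp [hterm, hu, inv_nonneg.2 hC.le]
    · have h1 : C * r ^ n ≤ ‖ζ ^ n - 1‖ := hdio n hn
      have h2 : (0:ℝ) < C * r ^ n := by positivity
      have h3 : (0:ℝ) < ‖ζ ^ n - 1‖ := lt_of_lt_of_le h2 h1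
      have : ‖term n ξ‖ = ‖ξ‖ ^ n * ‖κ‖ ^ n /
          (n * ‖ζ ^ n - 1‖) := by
        simp [hterm, map_div₀, map_mul, map_pow, Complex.norm_natCast]
      rw [this]
      have hn1 : (1:ℝ) ≤ (n:ℝ) := by exact_mod_cast hn
      calc ‖ξ‖ ^ n * ‖κ‖ ^ n / (n * ‖ζ ^ n - 1‖)
          ≤ 1 * ‖κ‖ ^ n / (1 * (C * r ^ n)) := by
            apply div_le_div₀ (by positivity)
              (by
                have := pow_le_one₀ (norm_nonneg ξ) hξ (n := n)
                nlinarith [pow_nonneg hκ0 n])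
              (by positivity)
              (by nlinarith)
        _ = u n := by
            rw [hu]
            simp only [div_pow]
            field_simp
  set b : ℂ → ℝ := fun ξ => -(∑' n : ℕ, term n ξ).re with hb
  have hsum : ∀ ξ : ℂ, ‖ξ‖ ≤ 1 → Summable (fun n => term n ξ) := by
    intro ξ hξ
    exact Summable.of_norm (hSu.of_nonneg_of_le (fun n => norm_nonneg _)
      (fun n => hbound n ξ hξ))
  refine ⟨b, ?_, ?_⟩
  · have : ContinuousOn (fun ξ => ∑' n : ℕ, term n ξ) {ξ : ℂ | ‖ξ‖ ≤ 1} := by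
      apply continuousOn_tsum (fun n => (Continuous.continuousOn (by continuity))) hSu
      intro n ξ hξ
      exact hbound n ξ hξ
    have h2 : ContinuousOn b {ξ : ℂ | ‖ξ‖ ≤ 1} :=
      (Complex.continuous_re.comp_continuousOn this).neg
    exact h2.mono (fun ξ hξ => le_of_eq hξ)
  · intro ξ hξ
    have hξ1 : ‖ξ‖ ≤ 1 := le_of_eq hξ
    have hξζ : ‖ξ * ζ‖ ≤ 1 := by rw [norm_mul, hξ, hζ]; norm_num
    have hS1 := hsum ξ hξ1
    have hS2 := hsum (ξ * ζ) hξζ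
    have hdiff : ∀ n : ℕ, term n (ξ * ζ) - term n ξ = (ξ * κ) ^ n / n := by
      intro n
      rcases Nat.eq_zero_or_pos n with rfl | hn
      · simp [hterm]
      · have hz : ζ ^ n - 1 ≠ 0 := sub_ne_zero.2 (hirr n hn)
        have hn0 : (n : ℂ) ≠ 0 := Nat.cast_ne_zero.2 hn.ne'
        simp only [hterm, mul_pow]
        field_simp
    have hlog : HasSum (fun n : ℕ => (ξ * κ) ^ n / n) (-Complex.log (1 - ξ * κ)) := by
      apply Complex.hasSum_taylorSeries_neg_log
      rw [norm_mul, hξ, one_mul]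
      exact hκ.trans hr1
    have htsub : (∑' n : ℕ, term n (ξ * ζ)) - (∑' n : ℕ, term n ξ)
        = -Complex.log (1 - ξ * κ) := by
      rw [← Summable.tsum_sub hS2 hS1]
      rw [← hlog.tsum_eq]
      exact tsum_congr hdiff
    have : b (ξ * ζ) - b ξ = ((∑' n : ℕ, term n ξ) - (∑' n : ℕ, term n (ξ * ζ))).re := by
      simp [hb, Complex.sub_re]; ring
    rw [this]
    have : (∑' n : ℕ, term n ξ) - (∑' n : ℕ, term n (ξ * ζ)) = Complex.log (1 - ξ * κ) := by
      rw [← neg_sub, htsub, neg_neg]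
    rw [this, Complex.log_re]
end

section
/- Let p ∈ ℤ[u] be monic and irreducible, and suppose p has a root ζ with |ζ| = 1 that is not a root of unity. Let M(p) denote the Mahler measure of p. Then M(p) > 1, and there is a constant C > 0 such that |ζ^n − 1| ≥ C·M(p)^{−n/2} for all n ≥ 1. -/
/-- The Mahler measure of an integer polynomial: the product of `max 1 |λ|` over its complex
roots `λ` (counted with multiplicity); for a monic polynomial this is the product of the
absolute values of the roots outside the closed unit disk. -/
noncomputable def mahlerMeasure (p : Polynomial ℤ) : ℝ :=
  ((p.map (Int.castRingHom ℂ)).roots.map fun lam => max 1 ‖lam‖).prod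

set_option maxHeartbeats 1600000
open IntermediateField Polynomial

/-- If `p ∈ ℤ[u]` is monic and irreducible with a root `ζ` on the unit
circle which is not a root of unity, then `M(p) > 1` and `|ζ^n − 1| ≥ C·M(p)^{−n/2}` for all
`n ≥ 1`, for some constant `C > 0`. -/
theorem root_of_unity_distance_bound
    (p : Polynomial ℤ) (hmonic : p.Monic) (hirr : Irreducible p)
    (ζ : ℂ) (hroot : Polynomial.aeval ζ p = 0) (habs : ‖ζ‖ = 1)
    (hru : ∀ n : ℕ, 1 ≤ n → ζ ^ n ≠ 1) :
    1 < mahlerMeasure p ∧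
      ∃ C : ℝ, 0 < C ∧ ∀ n : ℕ, 1 ≤ n →
        C * mahlerMeasure p ^ (-(n : ℝ) / 2) ≤ ‖ζ ^ n - 1‖ := by
  classical
  have hζ0 : ζ ≠ 0 := by
    intro h; rw [h] at habs; simp at habs
  have hζint : IsIntegral ℤ ζ := ⟨p, hmonic, hroot⟩
  have hζQ : IsIntegral ℚ ζ := hζint.tower_top
  haveI : FiniteDimensional ℚ ℚ⟮ζ⟯ := IntermediateField.adjoin.finiteDimensional hζQ
  set K : IntermediateField ℚ ℂ := ℚ⟮ζ⟯ with hK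
  set g : K := AdjoinSimple.gen ℚ ζ with hg
  have hgζ : algebraMap K ℂ g = ζ := AdjoinSimple.algebraMap_gen ℚ ζ
  have hinj : Function.Injective (algebraMap K ℂ) := (algebraMap K ℂ).injective
  -- minimal polynomial over ℚ
  have hminQ : minpoly ℚ ζ = p.map (algebraMap ℤ ℚ) := by
    refine (minpoly.eq_of_irreducible_of_monic ?_ ?_ (hmonic.map _)).symm
    · exact (hmonic.irreducible_iff_irreducible_map_fraction_map (K := ℚ)).mp hirr
    · rwa [aeval_map_algebraMap]
  have hmap : p.map (Int.castRingHom ℂ) = (minpoly ℚ ζ).map (algebraMap ℚ ℂ) := by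
    rw [hminQ, Polynomial.map_map,
      Subsingleton.elim ((algebraMap ℚ ℂ).comp (algebraMap ℤ ℚ)) (Int.castRingHom ℂ)]
  have hsep : ((minpoly ℚ ζ).aroots ℂ).Nodup :=
    nodup_roots ((minpoly.irreducible hζQ).separable.map)
  -- products over roots = products over embeddings
  have hprodgen : ∀ f : ℂ → ℝ,
      (((minpoly ℚ ζ).aroots ℂ).map f).prod = ∏ φ : K →ₐ[ℚ] ℂ, f (φ g) := by
    intro f
    set e := algHomAdjoinIntegralEquiv ℚ (K := ℂ) hζQ
    have he : ∀ φ : K →ₐ[ℚ] ℂ, φ g = ↑(e φ) := by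
      intro φ
      have := algHomAdjoinIntegralEquiv_symm_apply_gen ℚ (K := ℂ) hζQ (e φ)
      rwa [show (algHomAdjoinIntegralEquiv ℚ hζQ).symm (e φ) = φ from e.symm_apply_apply φ] at this
    rw [show (∏ φ : K →ₐ[ℚ] ℂ, f (φ g))
        = ∏ x : ↥((minpoly ℚ ζ).aroots ℂ).toFinset, f ↑x from
      Fintype.prod_equiv
        (e.trans (Equiv.subtypeEquivRight fun x => (Multiset.mem_toFinset).symm))
        _ _ (fun φ => by rw [he φ]; rfl)]
    rw [Finset.prod_coe_sort]
    rw [Finset.prod, Multiset.toFinset_val, Multiset.dedup_eq_self.mpr hsep]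
  -- Mahler measure as product over embeddings
  have hM : mahlerMeasure p = ∏ φ : K →ₐ[ℚ] ℂ, max 1 (‖φ g‖) := by
    rw [_root_.mahlerMeasure, hmap, ← aroots_def]
    exact hprodgen _
  -- norm lower bound
  have hnormge : ∀ x : K, IsIntegral ℤ x → x ≠ 0 →
      (1 : ℝ) ≤ ∏ φ : K →ₐ[ℚ] ℂ, ‖φ x‖ := by
    intro x hxi hx0
    obtain ⟨m, hm⟩ := IsIntegrallyClosed.isIntegral_iff.mp (Algebra.isIntegral_norm ℚ hxi)
    have hn0 : Algebra.norm ℚ x ≠ 0 := Algebra.norm_ne_zero_iff.mpr hx0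
    have hm0 : m ≠ 0 := by
      rintro rfl; exact hn0 (by rw [← hm]; simp)
    have h2 : algebraMap ℚ ℂ (Algebra.norm ℚ x) = ∏ φ : K →ₐ[ℚ] ℂ, φ x :=
      Algebra.norm_eq_prod_embeddings ℚ ℂ x
    have h3 : (∏ φ : K →ₐ[ℚ] ℂ, ‖φ x‖)
        = ‖algebraMap ℚ ℂ (Algebra.norm ℚ x)‖ := by
      rw [h2, norm_prod]
    rw [h3, ← hm]
    have h4 : (algebraMap ℚ ℂ) ((algebraMap ℤ ℚ) m) = (m : ℂ) := by
      push_cast; simp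
    rw [h4, Complex.norm_intCast]
    exact_mod_cast Int.one_le_abs hm0
  -- g is an algebraic integer
  have hgint : IsIntegral ℤ g := by
    refine ⟨p, hmonic, hinj ?_⟩
    rw [map_zero, ← hroot, ← hgζ]
    exact (Polynomial.aeval_algHom_apply (IsScalarTower.toAlgHom ℤ K ℂ) g p).symm
  -- 1 ≤ M
  have hone_le : ∀ φ : K →ₐ[ℚ] ℂ, (1:ℝ) ≤ max 1 (‖φ g‖) :=
    fun φ => le_max_left _ _
  have hone_le_prod : ∀ (s : Finset (K →ₐ[ℚ] ℂ)) (f : (K →ₐ[ℚ] ℂ) → ℝ),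
      (∀ ψ ∈ s, 1 ≤ f ψ) → 1 ≤ ∏ ψ ∈ s, f ψ := by
    intro s f h
    calc (1:ℝ) = ∏ _ψ ∈ s, 1 := Finset.prod_const_one.symm
    _ ≤ ∏ ψ ∈ s, f ψ := Finset.prod_le_prod (by intros; norm_num) h
  have hM1 : 1 ≤ mahlerMeasure p := by
    rw [hM]; exact hone_le_prod _ _ fun φ _ => hone_le φ
  have hMpos : 0 < mahlerMeasure p := lt_of_lt_of_le one_pos hM1
  -- M ≠ 1 (Kronecker)
  have hMne : mahlerMeasure p ≠ 1 := by
    intro hMe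
    have hle1 : ∀ φ : K →ₐ[ℚ] ℂ, ‖φ g‖ ≤ 1 := by
      intro φ
      have herase : (1:ℝ) ≤ ∏ ψ ∈ Finset.univ.erase φ, max 1 (‖ψ g‖) :=
        hone_le_prod _ _ fun ψ _ => hone_le ψ
      have hsplit : max 1 (‖φ g‖)
          * ∏ ψ ∈ Finset.univ.erase φ, max 1 (‖ψ g‖) = 1 := by
        rw [Finset.mul_prod_erase Finset.univ
          (fun ψ : K →ₐ[ℚ] ℂ => max 1 (‖ψ g‖)) (Finset.mem_univ φ), ← hM, hMe]
      have h0 : (0:ℝ) ≤ max 1 (‖φ g‖) := le_trans zero_le_one (hone_le φ)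
      have : max 1 (‖φ g‖) ≤ 1 := by nlinarith [hone_le φ]
      exact le_trans (le_max_right 1 _) this
    have hg0 : g ≠ 0 := by
      intro h; apply hζ0; rw [← hgζ, h, map_zero]
    have heq1 : ∀ φ : K →ₐ[ℚ] ℂ, ‖φ g‖ = 1 := by
      intro φ
      refine le_antisymm (hle1 φ) ?_
      have h1 : (1:ℝ) ≤ ∏ ψ : K →ₐ[ℚ] ℂ, ‖ψ g‖ := hnormge g hgint hg0
      have h2 : (∏ ψ : K →ₐ[ℚ] ℂ, ‖ψ g‖)
          ≤ ‖φ g‖ * 1 := by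
        rw [← Finset.mul_prod_erase Finset.univ _ (Finset.mem_univ φ)]
        refine mul_le_mul_of_nonneg_left ?_ (norm_nonneg _)
        exact Finset.prod_le_one (fun ψ _ => norm_nonneg _) (fun ψ _ => hle1 ψ)
      rw [mul_one] at h2
      exact le_trans h1 h2
    haveI : NumberField K := ⟨⟩
    obtain ⟨m, hm0, hm⟩ := NumberField.Embeddings.pow_eq_one_of_norm_eq_one K ℂ hgint
      (fun ψ => by
        exact heq1 ψ.toRatAlgHom)
    refine hru m hm0 ?_
    rw [← hgζ, ← map_pow, hm, map_one]
  -- the two conjugate embeddings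
  set φ₁ : K →ₐ[ℚ] ℂ := K.val with hφ₁
  set φ₂ : K →ₐ[ℚ] ℂ := ((starRingEnd ℂ).comp (algebraMap K ℂ)).toRatAlgHom with hφ₂
  have hφ1g : φ₁ g = ζ := hgζ
  have hφ2g : φ₂ g = (starRingEnd ℂ) ζ := by
    show (starRingEnd ℂ) ((algebraMap K ℂ) g) = _
    rw [hgζ]
  have hζnr : (starRingEnd ℂ) ζ ≠ ζ := by
    intro h
    have him : ζ.im = 0 := Complex.conj_eq_iff_im.mp h
    have hre : ζ = ((ζ.re : ℝ) : ℂ) := by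
      apply Complex.ext <;> simp [him]
    have habs' : |ζ.re| = 1 := by
      rw [hre, Complex.norm_real, Real.norm_eq_abs] at habs; exact habs
    refine hru 2 (by norm_num) ?_
    rw [hre, ← Complex.ofReal_pow, ← sq_abs, habs']
    norm_num
  have hne : φ₁ ≠ φ₂ := by
    intro h
    apply hζnr
    rw [← hφ2g, ← h, hφ1g]
  have hmem2 : φ₂ ∈ Finset.univ.erase φ₁ :=
    Finset.mem_erase.mpr ⟨hne.symm, Finset.mem_univ _⟩
  -- per-embedding upper bound
  have hb : ∀ (n : ℕ) (ψ : K →ₐ[ℚ] ℂ),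
      ‖ψ g ^ n - 1‖ ≤ 2 * max 1 (‖ψ g‖) ^ n := by
    intro n ψ
    have h1 : ‖ψ g‖ ^ n ≤ max 1 (‖ψ g‖) ^ n :=
      pow_le_pow_left₀ (norm_nonneg _) (le_max_right _ _) n
    have h2 : (1:ℝ) ≤ max 1 (‖ψ g‖) ^ n := by
      simpa using pow_le_pow_left₀ zero_le_one (le_max_left 1 (‖ψ g‖)) n
    calc ‖ψ g ^ n - 1‖ ≤ ‖ψ g ^ n‖ + ‖(1:ℂ)‖ := by
          exact norm_sub_le _ _
    _ = ‖ψ g‖ ^ n + 1 := by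
          rw [norm_pow, norm_one]
    _ ≤ 2 * max 1 (‖ψ g‖) ^ n := by linarith
  refine ⟨lt_of_le_of_ne hM1 (Ne.symm hMne), ?_⟩
  set d : ℕ := Fintype.card (K →ₐ[ℚ] ℂ) with hd
  have h2d : (0:ℝ) < 2 ^ d := by positivity
  refine ⟨(Real.sqrt (2 ^ d))⁻¹, by positivity, ?_⟩
  intro n hn
  set A : ℝ := ‖ζ ^ n - 1‖ with hA
  have hA0 : 0 ≤ A := norm_nonneg _
  set x : K := g ^ n - 1 with hx
  have hxint : IsIntegral ℤ x := (hgint.pow n).sub isIntegral_one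
  have hmapx : algebraMap K ℂ x = ζ ^ n - 1 := by
    rw [hx, map_sub, map_pow, map_one, hgζ]
  have hx0 : x ≠ 0 := by
    intro h
    refine hru n hn ?_
    have := hmapx
    rw [h, map_zero] at this
    linear_combination -this
  have h1 : (1:ℝ) ≤ ∏ φ : K →ₐ[ℚ] ℂ, ‖φ x‖ := hnormge x hxint hx0
  have hφx : ∀ ψ : K →ₐ[ℚ] ℂ, ‖ψ x‖ = ‖ψ g ^ n - 1‖ := by
    intro ψ; rw [hx, map_sub, map_pow, map_one]
  -- split off the two embeddings
  set F : (K →ₐ[ℚ] ℂ) → ℝ := fun ψ => ‖ψ x‖ with hF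
  set G : (K →ₐ[ℚ] ℂ) → ℝ := fun ψ => 2 * max 1 (‖ψ g‖) ^ n with hG
  have hFG : ∀ ψ, F ψ ≤ G ψ := fun ψ => by rw [hF]; simpa [hφx ψ] using hb n ψ
  have hG1 : ∀ ψ, (1:ℝ) ≤ G ψ := by
    intro ψ
    have : (1:ℝ) ≤ max 1 (‖ψ g‖) ^ n := by
      simpa using pow_le_pow_left₀ zero_le_one (le_max_left 1 (‖ψ g‖)) n
    simp only [hG]; linarith
  have hF1 : F φ₁ = A := by rw [hF]; simp only [hφx φ₁, hφ1g, hA]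
  have hF2 : F φ₂ = A := by
    have hc : (starRingEnd ℂ) ζ ^ n - 1 = (starRingEnd ℂ) (ζ ^ n - 1) := by
      rw [map_sub, map_pow, map_one]
    rw [hF]
    simp only [hφx φ₂, hφ2g, hA]
    rw [hc, Complex.norm_conj]
  set rest : Finset (K →ₐ[ℚ] ℂ) := (Finset.univ.erase φ₁).erase φ₂ with hrest
  have hsplitF : ∏ ψ : K →ₐ[ℚ] ℂ, F ψ = A * (A * ∏ ψ ∈ rest, F ψ) := by
    rw [← Finset.mul_prod_erase Finset.univ F (Finset.mem_univ φ₁),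
      ← Finset.mul_prod_erase _ F hmem2, hF1, hF2]
  have hsplitG : ∏ ψ : K →ₐ[ℚ] ℂ, G ψ = G φ₁ * (G φ₂ * ∏ ψ ∈ rest, G ψ) := by
    rw [← Finset.mul_prod_erase Finset.univ G (Finset.mem_univ φ₁),
      ← Finset.mul_prod_erase _ G hmem2]
  have hGuniv : ∏ ψ : K →ₐ[ℚ] ℂ, G ψ = 2 ^ d * mahlerMeasure p ^ n := by
    simp only [hG]
    rw [Finset.prod_mul_distrib, Finset.prod_const, Finset.prod_pow, ← hM,
      Finset.card_univ]
  have hrest0 : (0:ℝ) ≤ ∏ ψ ∈ rest, F ψ :=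
    Finset.prod_nonneg fun ψ _ => norm_nonneg _
  have hrestle : ∏ ψ ∈ rest, F ψ ≤ 2 ^ d * mahlerMeasure p ^ n := by
    have h1 : ∏ ψ ∈ rest, F ψ ≤ ∏ ψ ∈ rest, G ψ :=
      Finset.prod_le_prod (fun ψ _ => norm_nonneg _) (fun ψ _ => hFG ψ)
    have h2 : ∏ ψ ∈ rest, G ψ ≤ ∏ ψ : K →ₐ[ℚ] ℂ, G ψ := by
      rw [hsplitG]
      have hg1 := hG1 φ₁
      have hg2 := hG1 φ₂
      have h0 : (0:ℝ) ≤ ∏ ψ ∈ rest, G ψ :=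
        Finset.prod_nonneg fun ψ _ => le_trans zero_le_one (hG1 ψ)
      calc ∏ ψ ∈ rest, G ψ ≤ G φ₂ * ∏ ψ ∈ rest, G ψ := le_mul_of_one_le_left h0 hg2
      _ ≤ G φ₁ * (G φ₂ * ∏ ψ ∈ rest, G ψ) :=
          le_mul_of_one_le_left (mul_nonneg (le_trans zero_le_one hg2) h0) hg1
    rw [hGuniv] at h2
    exact le_trans h1 h2
  -- main inequality
  set Q : ℝ := 2 ^ d * mahlerMeasure p ^ n with hQ
  have hQpos : 0 < Q := by positivity
  have hkey : (1:ℝ) ≤ A ^ 2 * Q := by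
    rw [hsplitF] at h1
    nlinarith [mul_nonneg hA0 hA0, hrest0, hrestle, hA0]
  have hA2 : Q⁻¹ ≤ A ^ 2 := by
    rw [inv_eq_one_div]
    exact (div_le_iff₀ hQpos).mpr hkey
  have hAge : Real.sqrt Q⁻¹ ≤ A := by
    have := Real.sqrt_le_sqrt hA2
    rwa [Real.sqrt_sq hA0] at this
  have hfinal : (Real.sqrt (2 ^ d))⁻¹ * mahlerMeasure p ^ (-(n:ℝ)/2) = Real.sqrt Q⁻¹ := by
    have hpow : mahlerMeasure p ^ (-(n:ℝ)/2) = (Real.sqrt (mahlerMeasure p ^ n))⁻¹ := by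
      rw [← Real.rpow_natCast (mahlerMeasure p) n, Real.sqrt_eq_rpow,
        ← Real.rpow_mul hMpos.le, ← Real.rpow_neg hMpos.le]
      congr 1
      ring
    rw [hpow, hQ, Real.sqrt_inv, Real.sqrt_mul (by positivity : (0:ℝ) ≤ 2 ^ d), mul_inv]
  rw [hfinal]
  exact hAge
end

section
/- Let Δ be a countable discrete group and let f ∈ ℤΔ be invertible in ℓ¹(Δ,ℝ) (equivalently, the principal algebraic Δ-action α_f is expansive). Let w^△ : Δ → ℝ be the ℓ¹-inverse of f*, where f*(δ) = f(δ⁻¹); let β : ℝ → ℝ/ℤ denote reduction modulo 1 applied coordinatewise; and define π : ℓ∞(Δ,ℤ) → (ℝ/ℤ)^Δ by π(u) = β(u·w^△), where (u·w^△)(γ) = Σ_{δ∈Δ} u(γδ⁻¹)·w^△(δ) is an absolutely convergent sum. Then: (1) π maps ℓ∞(Δ,ℤ) onto X_f, and in fact the restriction of π to { u ∈ ℓ∞(Δ,ℤ) : sup_δ |u(δ)| ≤ ‖f‖₁ } is already surjective onto X_f, where ‖f‖₁ = Σ_{δ∈Δ} |f(δ)|; (2) for u ∈ ℓ∞(Δ,ℤ),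 π(u) = 0 if and only if u = ρ_f(u′) for some u′ ∈ ℓ∞(Δ,ℤ), where ρ_f(u′)(θ) = Σ_{δ∈Δ} u′(θδ)·f(δ). -/
open MeasureTheory Filter



variable {Δ : Type*} [Group Δ]

variable [DecidableEq Δ]

section Coe

lemma coeT1_eq (x : ℝ) :
    (x : T1) = QuotientAddGroup.mk' (AddSubgroup.zmultiples (1:ℝ)) x := rfl

lemma coeT1_sum {ι : Type*} (s : Finset ι) (g : ι → ℝ) :
    ((∑ i ∈ s, g i : ℝ) : T1) = ∑ i ∈ s, ((g i : ℝ) : T1) := by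
  simp only [coeT1_eq]
  exact map_sum (QuotientAddGroup.mk' _) g s

lemma coeT1_zsmul (n : ℤ) (x : ℝ) : ((n • x : ℝ) : T1) = n • (x : T1) := by
  simp only [coeT1_eq]
  exact map_zsmul (QuotientAddGroup.mk' _) n x

lemma coeT1_int (n : ℤ) : (((n : ℝ)) : T1) = 0 := by
  rw [AddCircle.coe_eq_zero_iff]
  exact ⟨n, by simp⟩

lemma coeT1_int_iff (x : ℝ) : ((x : T1)) = 0 ↔ ∃ n : ℤ, (n : ℝ) = x := by
  rw [AddCircle.coe_eq_zero_iff]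
  constructor
  · rintro ⟨n, hn⟩; exact ⟨n, by simpa using hn⟩
  · rintro ⟨n, hn⟩; exact ⟨n, by simpa using hn⟩

end Coe
set_option linter.unusedSectionVars false
section Helpers
variable {Δ : Type*} [Group Δ] [DecidableEq Δ]

lemma fstar_apply (f : MonoidAlgebra ℤ Δ) (a : Δ) : (fstar f).coeff a = f.coeff a⁻¹ := rfl

lemma sum_fstar_reindex (f : MonoidAlgebra ℤ Δ) (g : Δ → ℝ) :
    ∑ δ ∈ (fstar f).coeff.support, ((fstar f).coeff δ : ℝ) * g δ
      = ∑ ε ∈ f.coeff.support, (f.coeff ε : ℝ) * g ε⁻¹ := by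
  refine Finset.sum_nbij' (fun δ => δ⁻¹) (fun ε => ε⁻¹) ?_ ?_ ?_ ?_ ?_
  · intro a ha
    simp only [Finsupp.mem_support_iff] at ha ⊢
    simpa [fstar_apply] using ha
  · intro a ha
    simp only [Finsupp.mem_support_iff] at ha ⊢
    simpa [fstar_apply] using ha
  · intro a _; simp
  · intro a _; simp
  · intro a _; simp [fstar_apply]

lemma keyA {f : MonoidAlgebra ℤ Δ} {w : Δ → ℝ} (hw : IsL1Inverse (fstar f) w) (γ : Δ) :
    ∑ ε ∈ f.coeff.support, (f.coeff ε : ℝ) * w (ε * γ) = if γ = 1 then 1 else 0 := by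
  have := hw.2.1 γ
  rw [sum_fstar_reindex f (fun δ => w (δ⁻¹ * γ))] at this
  simpa using this

lemma keyB {f : MonoidAlgebra ℤ Δ} {w : Δ → ℝ} (hw : IsL1Inverse (fstar f) w) (γ : Δ) :
    ∑ ε ∈ f.coeff.support, (f.coeff ε : ℝ) * w (γ * ε) = if γ = 1 then 1 else 0 := by
  have h := hw.2.2 γ
  have h2 : ∑ δ ∈ (fstar f).coeff.support, ((fstar f).coeff δ : ℝ) * w (γ * δ⁻¹)
      = if γ = 1 then 1 else 0 := by
    rw [← h]; exact Finset.sum_congr rfl (fun ε _ => mul_comm _ _)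
  rw [sum_fstar_reindex f (fun δ => w (γ * δ⁻¹))] at h2
  simpa using h2

lemma summable_w_reindex {w : Δ → ℝ} (hW : Summable (fun δ => |w δ|)) (e : Δ ≃ Δ) :
    Summable (fun δ => |w (e δ)|) := (e.summable_iff (f := fun δ => |w δ|)).2 hW

/-- Summability of `γ ↦ s γ * w (γ⁻¹ * a)` for bounded `s`. -/
lemma summableL {w : Δ → ℝ} (hW : Summable (fun δ => |w δ|)) {s : Δ → ℝ} {C : ℝ}
    (hC : ∀ γ, |s γ| ≤ C) (a : Δ) : Summable (fun γ => s γ * w (γ⁻¹ * a)) := by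
  have h1 : Summable (fun γ : Δ => C * |w (γ⁻¹ * a)|) :=
    (summable_w_reindex hW ((Equiv.inv Δ).trans (Equiv.mulRight a))).mul_left C
  refine Summable.of_abs (h1.of_nonneg_of_le (fun _ => abs_nonneg _) (fun γ => ?_))
  rw [abs_mul]
  exact mul_le_mul_of_nonneg_right (hC γ) (abs_nonneg _)

/-- Summability of `δ ↦ s (γ * δ⁻¹) * w (a * δ)` for bounded `s`. -/
lemma summableR {w : Δ → ℝ} (hW : Summable (fun δ => |w δ|)) {s : Δ → ℝ} {C : ℝ}
    (hC : ∀ γ, |s γ| ≤ C) (γ a : Δ) : Summable (fun δ => s (γ * δ⁻¹) * w (a * δ)) := by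
  have h1 : Summable (fun δ : Δ => C * |w (a * δ)|) :=
    (summable_w_reindex hW (Equiv.mulLeft a)).mul_left C
  refine Summable.of_abs (h1.of_nonneg_of_le (fun _ => abs_nonneg _) (fun δ => ?_))
  rw [abs_mul]
  exact mul_le_mul_of_nonneg_right (hC _) (abs_nonneg _)

end Helpers
set_option linter.unusedSectionVars false
section Main
variable {Δ : Type*} [Group Δ] [DecidableEq Δ]

lemma summableR' {w : Δ → ℝ} (hW : Summable (fun δ => |w δ|)) {s : Δ → ℝ} {C : ℝ}
    (hC : ∀ γ, |s γ| ≤ C) (γ : Δ) : Summable (fun δ => s (γ * δ⁻¹) * w δ) := by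
  refine Summable.of_abs ((hW.mul_left C).of_nonneg_of_le (fun _ => abs_nonneg _) (fun δ => ?_))
  rw [abs_mul]
  exact mul_le_mul_of_nonneg_right (hC _) (abs_nonneg _)

/-- Lemma E : convolving `π`-sums back with `f` recovers `u`. -/
lemma lemE {f : MonoidAlgebra ℤ Δ} {w : Δ → ℝ} (hw : IsL1Inverse (fstar f) w)
    {u : Δ → ℝ} {C : ℝ} (hC : ∀ γ, |u γ| ≤ C) (θ : Δ) :
    ∑ δ ∈ f.coeff.support, (f.coeff δ : ℝ) * (∑' η, u (θ * δ * η⁻¹) * w η) = u θ := by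
  have hW := hw.1
  -- step 1: reindex inner tsum
  have step1 : ∀ δ : Δ, (∑' η, u (θ * δ * η⁻¹) * w η)
      = ∑' γ : Δ, u γ * w (γ⁻¹ * (θ * δ)) := by
    intro δ
    rw [← ((Equiv.inv Δ).trans (Equiv.mulRight (θ * δ))).tsum_eq
      (fun η => u (θ * δ * η⁻¹) * w η)]
    refine tsum_congr fun γ => ?_
    simp only [Equiv.trans_apply, Equiv.inv_apply, Equiv.coe_mulRight]
    congr 1
    group
  simp only [step1]
  -- step 2: swap finite sum and tsum
  have hsummable : ∀ δ ∈ f.coeff.support,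
      Summable (fun γ : Δ => (f.coeff δ : ℝ) * (u γ * w (γ⁻¹ * (θ * δ)))) :=
    fun δ _ => (summableL hW hC (θ * δ)).mul_left _
  calc ∑ δ ∈ f.coeff.support, (f.coeff δ : ℝ) * ∑' γ : Δ, u γ * w (γ⁻¹ * (θ * δ))
      = ∑ δ ∈ f.coeff.support, ∑' γ : Δ, (f.coeff δ : ℝ) * (u γ * w (γ⁻¹ * (θ * δ))) := by
        exact Finset.sum_congr rfl fun δ _ => (tsum_mul_left).symm
    _ = ∑' γ : Δ, ∑ δ ∈ f.coeff.support, (f.coeff δ : ℝ) * (u γ * w (γ⁻¹ * (θ * δ))) :=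
        (Summable.tsum_finsetSum hsummable).symm
    _ = ∑' γ : Δ, (if γ = θ then u θ else 0) := by
        refine tsum_congr fun γ => ?_
        have : ∑ δ ∈ f.coeff.support, (f.coeff δ : ℝ) * (u γ * w (γ⁻¹ * (θ * δ)))
            = u γ * ∑ δ ∈ f.coeff.support, (f.coeff δ : ℝ) * w ((γ⁻¹ * θ) * δ) := by
          rw [Finset.mul_sum]
          exact Finset.sum_congr rfl fun δ _ => by rw [mul_assoc]; ring
        rw [this, keyB hw (γ⁻¹ * θ)]
        by_cases h : γ = θ
        · simp [h]
        · have : ¬ γ⁻¹ * θ = 1 := by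
            simp only [inv_mul_eq_one]; exact h
          simp [this, h]
    _ = u θ := tsum_ite_eq θ (fun _ => u θ)

/-- Lemma D : if `u = f ⋆ s` for bounded `s`, then `u ⋆ w = s`. -/
lemma lemD {f : MonoidAlgebra ℤ Δ} {w : Δ → ℝ} (hw : IsL1Inverse (fstar f) w)
    {s : Δ → ℝ} {C : ℝ} (hC : ∀ γ, |s γ| ≤ C)
    {u : Δ → ℝ} (hu : ∀ θ, u θ = ∑ ε ∈ f.coeff.support, (f.coeff ε : ℝ) * s (θ * ε)) (γ : Δ) :
    ∑' δ : Δ, u (γ * δ⁻¹) * w δ = s γ := by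
  have hW := hw.1
  have hsum1 : ∀ ε ∈ f.coeff.support,
      Summable (fun δ : Δ => ((f.coeff ε : ℝ) * s (γ * δ⁻¹ * ε)) * w δ) := by
    intro ε _
    have hb : ∀ x : Δ, |(f.coeff ε : ℝ) * s (x * ε)| ≤ |(f.coeff ε : ℝ)| * C := by
      intro x; rw [abs_mul]
      exact mul_le_mul_of_nonneg_left (hC _) (abs_nonneg _)
    exact summableR' hW (s := fun x => (f.coeff ε : ℝ) * s (x * ε)) hb γ
  have hsum2 : ∀ ε ∈ f.coeff.support,
      Summable (fun δ : Δ => ((f.coeff ε : ℝ) * s (γ * δ⁻¹)) * w (ε * δ)) := by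
    intro ε hε
    have := ((Equiv.mulLeft ε).summable_iff
      (f := fun δ : Δ => ((f.coeff ε : ℝ) * s (γ * δ⁻¹ * ε)) * w δ)).2 (hsum1 ε hε)
    refine this.congr fun δ => ?_
    have h3 : γ * (ε * δ)⁻¹ * ε = γ * δ⁻¹ := by group
    simp only [Function.comp_apply, Equiv.coe_mulLeft, h3]
  calc ∑' δ : Δ, u (γ * δ⁻¹) * w δ
      = ∑' δ : Δ, ∑ ε ∈ f.coeff.support, ((f.coeff ε : ℝ) * s (γ * δ⁻¹ * ε)) * w δ := by
        refine tsum_congr fun δ => ?_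
        rw [hu (γ * δ⁻¹), Finset.sum_mul]
    _ = ∑ ε ∈ f.coeff.support, ∑' δ : Δ, ((f.coeff ε : ℝ) * s (γ * δ⁻¹ * ε)) * w δ :=
        Summable.tsum_finsetSum hsum1
    _ = ∑ ε ∈ f.coeff.support, ∑' δ : Δ, ((f.coeff ε : ℝ) * s (γ * δ⁻¹)) * w (ε * δ) := by
        refine Finset.sum_congr rfl fun ε _ => ?_
        rw [← ((Equiv.mulLeft ε).tsum_eq
          (fun δ : Δ => ((f.coeff ε : ℝ) * s (γ * δ⁻¹ * ε)) * w δ))]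
        refine tsum_congr fun δ => ?_
        simp only [Equiv.coe_mulLeft]
        congr 2
        group
    _ = ∑' δ : Δ, ∑ ε ∈ f.coeff.support, ((f.coeff ε : ℝ) * s (γ * δ⁻¹)) * w (ε * δ) :=
        (Summable.tsum_finsetSum hsum2).symm
    _ = ∑' δ : Δ, (if δ = 1 then s γ else 0) := by
        refine tsum_congr fun δ => ?_
        have : ∑ ε ∈ f.coeff.support, ((f.coeff ε : ℝ) * s (γ * δ⁻¹)) * w (ε * δ)
            = s (γ * δ⁻¹) * ∑ ε ∈ f.coeff.support, (f.coeff ε : ℝ) * w (ε * δ) := by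
          rw [Finset.mul_sum]
          exact Finset.sum_congr rfl fun ε _ => by ring
        rw [this, keyA hw δ]
        by_cases h : δ = 1 <;> simp [h]
    _ = s γ := tsum_ite_eq 1 (fun _ => s γ)

end Main

/-- Deninger–Schmidt. Let `f ∈ ℤΔ` be invertible in `ℓ¹(Δ,ℝ)` with
`w^△` the `ℓ¹`-inverse of `f*`, and let `π(u) = β(u·w^△)` for bounded `u : Δ → ℤ`. Then
`π` maps `ℓ∞(Δ,ℤ)` onto `X_f` (already on the set of `u` with `‖u‖_∞ ≤ ‖f‖₁`), and
`π(u) = 0` iff `u = ρ_f(u′)` for some bounded `u′ : Δ → ℤ`. -/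
theorem symbolic_cover_of_principal_action
    {Δ : Type*} [Group Δ] [Countable Δ] [DecidableEq Δ]
    (f : MonoidAlgebra ℤ Δ) (w : Δ → ℝ) (hw : IsL1Inverse (fstar f) w) :
    (∀ u : Δ → ℤ, (∃ C : ℤ, ∀ δ, |u δ| ≤ C) →
      (fun γ : Δ => (↑(∑' δ : Δ, (u (γ * δ⁻¹) : ℝ) * w δ) : T1)) ∈ Xf f) ∧
    (∀ t ∈ Xf f, ∃ u : Δ → ℤ,
      (∀ δ, |u δ| ≤ ∑ δ' ∈ f.coeff.support, |f.coeff δ'|) ∧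
      (fun γ : Δ => (↑(∑' δ : Δ, (u (γ * δ⁻¹) : ℝ) * w δ) : T1)) = t) ∧
    (∀ u : Δ → ℤ, (∃ C : ℤ, ∀ δ, |u δ| ≤ C) →
      ((fun γ : Δ => (↑(∑' δ : Δ, (u (γ * δ⁻¹) : ℝ) * w δ) : T1)) = 0 ↔
        ∃ u' : Δ → ℤ, (∃ C : ℤ, ∀ δ, |u' δ| ≤ C) ∧
          u = fun θ : Δ => ∑ δ ∈ f.coeff.support, u' (θ * δ) * f.coeff δ)) := by
  have hW := hw.1
  refine ⟨?_, ?_, ?_⟩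
  · -- Part 1: π(u) ∈ X_f for bounded u
    rintro u ⟨C, hC⟩ θ
    have hC' : ∀ γ : Δ, |(u γ : ℝ)| ≤ (C : ℝ) := fun γ => by exact_mod_cast hC γ
    have hE := lemE hw hC' θ
    calc ∑ δ ∈ f.coeff.support,
          f.coeff δ • ((fun γ : Δ => (↑(∑' η : Δ, (u (γ * η⁻¹) : ℝ) * w η) : T1)) (θ * δ))
        = ∑ δ ∈ f.coeff.support,
            (((f.coeff δ : ℝ) * ∑' η : Δ, (u (θ * δ * η⁻¹) : ℝ) * w η : ℝ) : T1) := by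
          refine Finset.sum_congr rfl fun δ _ => ?_
          rw [← coeT1_zsmul]
          norm_num
      _ = ((∑ δ ∈ f.coeff.support,
            (f.coeff δ : ℝ) * ∑' η : Δ, (u (θ * δ * η⁻¹) : ℝ) * w η : ℝ) : T1) :=
          (coeT1_sum _ _).symm
      _ = (((u θ : ℝ)) : T1) := by rw [hE]
      _ = 0 := coeT1_int (u θ)
  · -- Part 2: surjectivity onto X_f with bound ‖f‖₁
    intro t ht
    choose s hs1 hs2 using fun δ : Δ => AddCircle.eq_coe_Ico (t δ)
    have hsabs : ∀ δ, |s δ| ≤ 1 := fun δ => by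
      rw [abs_le]; exact ⟨by linarith [(hs1 δ).1], le_of_lt (hs1 δ).2⟩
    have hint : ∀ θ : Δ, ∃ n : ℤ, (n : ℝ) = ∑ δ ∈ f.coeff.support, (f.coeff δ : ℝ) * s (θ * δ) := by
      intro θ
      rw [← coeT1_int_iff]
      calc ((∑ δ ∈ f.coeff.support, (f.coeff δ : ℝ) * s (θ * δ) : ℝ) : T1)
          = ∑ δ ∈ f.coeff.support, f.coeff δ • ((s (θ * δ) : ℝ) : T1) := by
            rw [coeT1_sum]
            refine Finset.sum_congr rfl fun δ _ => ?_
            rw [← coeT1_zsmul]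
            norm_num
        _ = ∑ δ ∈ f.coeff.support, f.coeff δ • t (θ * δ) := by
            refine Finset.sum_congr rfl fun δ _ => ?_
            rw [hs2]
        _ = 0 := ht θ
    choose u hu using hint
    refine ⟨u, ?_, ?_⟩
    · intro δ
      have h1 : |(u δ : ℝ)| ≤ ((∑ δ' ∈ f.coeff.support, |f.coeff δ'| : ℤ) : ℝ) := by
        rw [hu δ]
        push_cast
        refine (Finset.abs_sum_le_sum_abs _ _).trans ?_
        refine Finset.sum_le_sum fun δ' _ => ?_
        rw [abs_mul]
        calc |(f.coeff δ' : ℝ)| * |s (δ * δ')| ≤ |(f.coeff δ' : ℝ)| * 1 :=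
              mul_le_mul_of_nonneg_left (hsabs _) (abs_nonneg _)
          _ = |(f.coeff δ' : ℝ)| := mul_one _
      exact_mod_cast h1
    · funext γ
      have hd := lemD hw hsabs (u := fun θ : Δ => (u θ : ℝ)) (fun θ => hu θ) γ
      show ((∑' δ : Δ, (u (γ * δ⁻¹) : ℝ) * w δ : ℝ) : T1) = t γ
      rw [hd, hs2]
  · -- Part 3: kernel of π
    rintro u ⟨C, hC⟩
    have hC' : ∀ γ : Δ, |(u γ : ℝ)| ≤ (C : ℝ) := fun γ => by exact_mod_cast hC γ
    constructor
    · intro h0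
      have hv : ∀ γ : Δ, ∃ n : ℤ,
          (n : ℝ) = ∑' δ : Δ, (u (γ * δ⁻¹) : ℝ) * w δ := by
        intro γ
        rw [← coeT1_int_iff]
        exact congrFun h0 γ
      choose u' hu' using hv
      have hbound : ∀ γ : Δ, |(u' γ : ℝ)| ≤ (C : ℝ) * ∑' δ : Δ, |w δ| := by
        intro γ
        rw [hu' γ]
        have hs1 : Summable (fun δ : Δ => |(u (γ * δ⁻¹) : ℝ)| * |w δ|) :=
          ((summableR' hW hC' γ).abs).congr fun δ => abs_mul _ _
        calc |∑' δ : Δ, (u (γ * δ⁻¹) : ℝ) * w δ|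
            ≤ ∑' δ : Δ, |(u (γ * δ⁻¹) : ℝ)| * |w δ| := by
              simpa [Real.norm_eq_abs, abs_mul] using
                norm_tsum_le_tsum_norm (f := fun δ : Δ => (u (γ * δ⁻¹) : ℝ) * w δ)
                  (by simpa [Real.norm_eq_abs, abs_mul] using hs1)
          _ ≤ ∑' δ : Δ, (C : ℝ) * |w δ| :=
              Summable.tsum_le_tsum (fun δ => mul_le_mul_of_nonneg_right (hC' _) (abs_nonneg _))
                hs1 (hW.mul_left _)
          _ = (C : ℝ) * ∑' δ : Δ, |w δ| := tsum_mul_left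
      refine ⟨u', ⟨⌈(C : ℝ) * ∑' δ : Δ, |w δ|⌉, fun δ => ?_⟩, ?_⟩
      · have := (hbound δ).trans (Int.le_ceil _)
        exact_mod_cast this
      · funext θ
        have hE := lemE hw hC' θ
        have : ((∑ δ ∈ f.coeff.support, u' (θ * δ) * f.coeff δ : ℤ) : ℝ) = (u θ : ℝ) := by
          push_cast
          rw [← hE]
          refine Finset.sum_congr rfl fun δ _ => ?_
          rw [hu' (θ * δ)]
          ring
        exact_mod_cast this.symm
    · rintro ⟨u', ⟨C', hC2⟩, huu⟩
      have hC2' : ∀ γ : Δ, |(u' γ : ℝ)| ≤ (C' : ℝ) := fun γ => by exact_mod_cast hC2 γ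
      have hueq : ∀ θ : Δ, (u θ : ℝ) = ∑ ε ∈ f.coeff.support, (f.coeff ε : ℝ) * (u' (θ * ε) : ℝ) := by
        intro θ
        rw [congrFun huu θ]
        push_cast
        exact Finset.sum_congr rfl fun ε _ => mul_comm _ _
      funext γ
      have hd := lemD hw hC2' (u := fun θ : Δ => (u θ : ℝ)) hueq γ
      show ((∑' δ : Δ, (u (γ * δ⁻¹) : ℝ) * w δ : ℝ) : T1) = 0
      rw [hd]
      exact coeT1_int (u' γ)
end

section
/- Let Δ be a countable discrete group and let f ∈ ℤΔ be invertible in ℓ¹(Δ,ℝ) (equivalently, the principal algebraic Δ-action α_f is expansive). Let w^△ : Δ → ℝ be the ℓ¹-inverse of f*, where f*(δ) = f(δ⁻¹), and let β : ℝ → ℝ/ℤ denote reduction modulo 1 applied coordinatewise. Call t ∈ X_f homoclinic if for every ε > 0 the set { γ ∈ Δ : d(t_γ, 0) ≥ ε } is finite, where d is the quotient metric on ℝ/ℤ. Then every homoclinic point t ∈ X_f is a finite integral combination of left translates of the fundamental homoclinic point t^△ = β(w^△): there exists a finitely supported g : Δ → ℤ with t = β(g·w^△), where (g·w^△)(γ)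 = Σ_{δ∈Δ} g(γδ⁻¹)·w^△(δ). -/
open MeasureTheory Filter



variable {Δ : Type*} [Group Δ]

variable [DecidableEq Δ]

/-- For `f ∈ ℤΔ` invertible in `ℓ¹(Δ,ℝ)` with `w^△` the `ℓ¹`-inverse of
`f*`, every homoclinic point of `α_f` is a finite integral combination of left translates of
the fundamental homoclinic point `t^△ = β(w^△)`. -/
theorem homoclinic_points_generated_by_fundamental
    {Δ : Type*} [Group Δ] [Countable Δ] [DecidableEq Δ]
    (f : MonoidAlgebra ℤ Δ) (w : Δ → ℝ) (hw : IsL1Inverse (fstar f) w)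
    (t : Δ → T1) (ht : t ∈ Xf f)
    (hhom : ∀ ε : ℝ, 0 < ε → {γ : Δ | ε ≤ ‖t γ‖}.Finite) :
    ∃ g : Δ →₀ ℤ, ∀ γ : Δ, t γ = ↑(∑' δ : Δ, (g (γ * δ⁻¹) : ℝ) * w δ) := by

  classical
  obtain ⟨hw1, hw2, _⟩ := hw
  -- the projection ℝ → T1 as an additive group hom
  set β : ℝ →+ T1 := QuotientAddGroup.mk' _ with hβdef
  have hβ : ∀ r : ℝ, β r = (r : T1) := fun r => rfl
  -- choose a good lift of t
  have hlift : ∀ γ : Δ, ∃ r : ℝ, (r : T1) = t γ ∧ |r| = ‖t γ‖ ∧ |r| ≤ 1 / 2 := by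
    intro γ
    obtain ⟨x, hx⟩ := QuotientAddGroup.mk_surjective (t γ)
    refine ⟨x - round x, ?_, ?_, ?_⟩
    · have h0 : ((round x : ℝ) : T1) = 0 := by
        rw [AddCircle.coe_eq_zero_iff]
        exact ⟨round x, by simp⟩
      have : ((x - round x : ℝ) : T1) = (x : T1) - ((round x : ℝ) : T1) := by
        push_cast
        rfl
      rw [this, h0, sub_zero]
      exact hx
    · rw [← hx, AddCircle.norm_eq]
      simp
    · exact abs_sub_round x
  choose v hv1 hv2 hv3 using hlift
  -- the integer-valued function g₀
  have hint : ∀ s : Δ, ∃ m : ℤ, (m : ℝ) = ∑ η ∈ f.coeff.support, (f.coeff η : ℝ) * v (s * η) := by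
    intro s
    have hz : β (∑ η ∈ f.coeff.support, (f.coeff η : ℝ) * v (s * η)) = 0 := by
      rw [map_sum]
      have : ∀ η ∈ f.coeff.support, β ((f.coeff η : ℝ) * v (s * η)) = f.coeff η • t (s * η) := by
        intro η _
        have : (f.coeff η : ℝ) * v (s * η) = f.coeff η • v (s * η) := by
          simp [zsmul_eq_mul]
        rw [this, map_zsmul, hβ, hv1]
      rw [Finset.sum_congr rfl this]
      exact ht s
    rw [hβ, AddCircle.coe_eq_zero_iff] at hz
    obtain ⟨m, hm⟩ := hz
    exact ⟨m, by simpa using hm⟩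
  choose m hm using hint
  -- g₀ has finite support
  set B : ℝ := ∑ η ∈ f.coeff.support, |(f.coeff η : ℝ)| with hBdef
  have hB0 : 0 ≤ B := Finset.sum_nonneg fun η _ => abs_nonneg _
  set ε : ℝ := 1 / (2 * (B + 1)) with hεdef
  have hε : 0 < ε := by positivity
  have hF : {γ : Δ | ε ≤ ‖t γ‖}.Finite := hhom ε hε
  have hK : (⋃ η ∈ f.coeff.support, (fun s : Δ => s * η) ⁻¹' {γ : Δ | ε ≤ ‖t γ‖}).Finite := by
    refine Set.Finite.biUnion f.coeff.support.finite_toSet fun η _ => ?_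
    exact Set.Finite.preimage (Function.Injective.injOn (mul_left_injective η)) hF
  have hmzero : ∀ s : Δ, s ∉ (⋃ η ∈ f.coeff.support, (fun s : Δ => s * η) ⁻¹' {γ : Δ | ε ≤ ‖t γ‖}) →
      m s = 0 := by
    intro s hs
    have hsmall : ∀ η ∈ f.coeff.support, |v (s * η)| < ε := by
      intro η hη
      have : s ∉ (fun s : Δ => s * η) ⁻¹' {γ : Δ | ε ≤ ‖t γ‖} := by
        intro h
        exact hs (Set.mem_biUnion hη h)
      simp only [Set.mem_preimage, Set.mem_setOf_eq, not_le] at this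
      rw [hv2]
      exact this
    have habs : |(m s : ℝ)| < 1 := by
      rw [hm]
      calc |∑ η ∈ f.coeff.support, (f.coeff η : ℝ) * v (s * η)|
          ≤ ∑ η ∈ f.coeff.support, |(f.coeff η : ℝ) * v (s * η)| := Finset.abs_sum_le_sum_abs _ _
        _ ≤ ∑ η ∈ f.coeff.support, |(f.coeff η : ℝ)| * ε := by
            refine Finset.sum_le_sum fun η hη => ?_
            rw [abs_mul]
            exact mul_le_mul_of_nonneg_left (le_of_lt (hsmall η hη)) (abs_nonneg _)
        _ = B * ε := by rw [← Finset.sum_mul]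
        _ < 1 := by
            rw [hεdef]
            rw [div_eq_mul_inv, one_mul, ← div_eq_mul_inv, div_lt_one (by positivity)]
            nlinarith
    have : |m s| < 1 := by exact_mod_cast habs
    exact Int.abs_lt_one_iff.mp this
  have hfin : (Function.support m).Finite := by
    refine Set.Finite.subset hK fun s hs => ?_
    by_contra h
    exact hs (hmzero s h)
  refine ⟨Finsupp.ofSupportFinite m hfin, fun γ => ?_⟩
  have hg : ∀ s : Δ, (Finsupp.ofSupportFinite m hfin) s = m s := fun s => rfl
  -- rewrite the ℓ¹-inverse identity in terms of f.coeff.support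
  have hL : ∀ γ : Δ, ∑ η ∈ f.coeff.support, (f.coeff η : ℝ) * w (η * γ) = if γ = 1 then 1 else 0 := by
    intro γ
    have h := hw2 γ
    have hsupp : (fstar f).coeff.support = f.coeff.support.map (Equiv.inv Δ).toEmbedding := rfl
    rw [hsupp, Finset.sum_map] at h
    simpa [fstar, Finsupp.equivMapDomain_apply] using h
  -- summability helpers
  have hWsum : ∀ φ : Δ ≃ Δ, Summable fun u => |w (φ u)| := by
    intro φ
    exact (Equiv.summable_iff φ (f := fun δ => |w δ|)).2 hw1
  have hSum : ∀ (a : Δ → ℝ), (∀ u, |a u| ≤ 1) → ∀ φ : Δ ≃ Δ,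
      Summable fun u => a u * w (φ u) := by
    intro a ha φ
    refine Summable.of_abs (Summable.of_nonneg_of_le (fun u => abs_nonneg _)
      (fun u => ?_) (hWsum φ))
    rw [abs_mul]
    calc |a u| * |w (φ u)| ≤ 1 * |w (φ u)| :=
          mul_le_mul_of_nonneg_right (ha u) (abs_nonneg _)
      _ = |w (φ u)| := one_mul _
  have hvb : ∀ u : Δ, |v u| ≤ 1 := fun u => (hv3 u).trans (by norm_num)
  -- reindex the tsum
  have e1 : Δ ≃ Δ := (Equiv.inv Δ).trans (Equiv.mulLeft γ)
  have hre : (∑' δ : Δ, ((Finsupp.ofSupportFinite m hfin) (γ * δ⁻¹) : ℝ) * w δ)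
      = ∑' s : Δ, (m s : ℝ) * w (s⁻¹ * γ) := by
    have := Equiv.tsum_eq ((Equiv.inv Δ).trans (Equiv.mulLeft γ))
      (fun s : Δ => (m s : ℝ) * w (s⁻¹ * γ))
    rw [← this]
    refine tsum_congr fun δ => ?_
    simp only [Equiv.trans_apply, Equiv.inv_apply, Equiv.coe_mulLeft, hg]
    congr 2
    group
  rw [hre]
  -- main computation
  have eφ1 : Δ ≃ Δ := (Equiv.inv Δ).trans (Equiv.mulRight γ)
  have step1 : (∑' s : Δ, (m s : ℝ) * w (s⁻¹ * γ))
      = ∑' s : Δ, ∑ η ∈ f.coeff.support, (f.coeff η : ℝ) * (v (s * η) * w (s⁻¹ * γ)) := by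
    refine tsum_congr fun s => ?_
    rw [hm, Finset.sum_mul]
    exact Finset.sum_congr rfl fun η _ => (mul_assoc _ _ _)
  have hsummable1 : ∀ η ∈ f.coeff.support,
      Summable fun s : Δ => (f.coeff η : ℝ) * (v (s * η) * w (s⁻¹ * γ)) := by
    intro η _
    exact Summable.mul_left _ (hSum (fun s => v (s * η)) (fun s => hvb _)
      ((Equiv.inv Δ).trans (Equiv.mulRight γ)))
  have step2 : (∑' s : Δ, ∑ η ∈ f.coeff.support, (f.coeff η : ℝ) * (v (s * η) * w (s⁻¹ * γ)))
      = ∑ η ∈ f.coeff.support, ∑' s : Δ, (f.coeff η : ℝ) * (v (s * η) * w (s⁻¹ * γ)) :=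
    Summable.tsum_finsetSum hsummable1
  have step3 : ∀ η ∈ f.coeff.support,
      (∑' s : Δ, (f.coeff η : ℝ) * (v (s * η) * w (s⁻¹ * γ)))
      = ∑' u : Δ, (f.coeff η : ℝ) * (v u * w (η * (u⁻¹ * γ))) := by
    intro η _
    have := Equiv.tsum_eq (Equiv.mulRight η⁻¹)
      (fun s : Δ => (f.coeff η : ℝ) * (v (s * η) * w (s⁻¹ * γ)))
    rw [← this]
    refine tsum_congr fun u => ?_
    simp only [Equiv.coe_mulRight]
    congr 2
    · group
    · congr 1
      group
  have hsummable2 : ∀ η ∈ f.coeff.support,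
      Summable fun u : Δ => (f.coeff η : ℝ) * (v u * w (η * (u⁻¹ * γ))) := by
    intro η _
    exact Summable.mul_left _ (hSum v hvb
      (((Equiv.inv Δ).trans (Equiv.mulRight γ)).trans (Equiv.mulLeft η)))
  have step4 : (∑ η ∈ f.coeff.support, ∑' u : Δ, (f.coeff η : ℝ) * (v u * w (η * (u⁻¹ * γ))))
      = ∑' u : Δ, ∑ η ∈ f.coeff.support, (f.coeff η : ℝ) * (v u * w (η * (u⁻¹ * γ))) :=
    (Summable.tsum_finsetSum hsummable2).symm
  have step5 : ∀ u : Δ, (∑ η ∈ f.coeff.support, (f.coeff η : ℝ) * (v u * w (η * (u⁻¹ * γ))))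
      = v u * (if u⁻¹ * γ = 1 then (1 : ℝ) else 0) := by
    intro u
    rw [← hL (u⁻¹ * γ), Finset.mul_sum]
    exact Finset.sum_congr rfl fun η _ => by ring
  have step6 : (∑' u : Δ, v u * (if u⁻¹ * γ = 1 then (1 : ℝ) else 0)) = v γ := by
    have h := tsum_eq_single (L := SummationFilter.unconditional Δ) (f := fun u : Δ => v u * (if u⁻¹ * γ = 1 then (1 : ℝ) else 0)) γ
      (fun u hu => by
        have hne : u⁻¹ * γ ≠ 1 := fun h => hu (by
          have := congrArg (fun x => u * x) h
          simpa [mul_assoc] using this.symm)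
        simp [hne])
    simpa using h
  have : (∑' s : Δ, (m s : ℝ) * w (s⁻¹ * γ)) = v γ := by
    rw [step1, step2, Finset.sum_congr rfl step3, step4]
    rw [tsum_congr step5, step6]
  rw [this, hv1]
end

section
/- Let Δ be a countable discrete group, let f ∈ ℤΔ be invertible in ℓ¹(Δ,ℝ) (equivalently, the principal algebraic Δ-action α_f is expansive), and let Λ be a subgroup of Δ of finite index n = [Δ:Λ]. Let Fix_Λ(α_f) = { t ∈ X_f : t_{λ⁻¹γ} = t_γ for all λ ∈ Λ and γ ∈ Δ } be the set of Λ-fixed points of α_f, and let V be the real vector space of functions w : Δ → ℝ that are constant on every right coset Λγ (so dim V = n), which is mapped to itself by the linear operator ρ_f defined by ρ_f(w)(θ) = Σ_{δ∈Δ} w(θδ)·f(δ). Then Fix_Λ(α_f) is finite and its cardinality equals |det(ρ_f|_V)|, the absolute value of the determinant of the restriction of ρ_f to V. -/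
open MeasureTheory Filter



variable {Δ : Type*} [Group Δ]

variable [DecidableEq Δ]

/-- The space of real-valued functions on `Δ` constant on every right coset `Λγ`. -/
def cosetV {Δ : Type*} [Group Δ] (Λ : Subgroup Δ) : Submodule ℝ (Δ → ℝ) where
  carrier := {w : Δ → ℝ | ∀ l ∈ Λ, ∀ γ : Δ, w (l * γ) = w γ}
  add_mem' := by
    intro a b ha hb l hl γ
    simp [ha l hl γ, hb l hl γ]
  zero_mem' := by intro l hl γ; rfl
  smul_mem' := by
    intro c a ha l hl γ
    simp [ha l hl γ]

/-- Right convolution `ρ_f` by `f* `, i.e. `ρ_f(w)(θ) = ∑_δ w(θδ)·f(δ)`, as a linear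
endomorphism of `Δ → ℝ`. -/
noncomputable def rhoLin {Δ : Type*} [Group Δ] (f : MonoidAlgebra ℤ Δ) :
    (Δ → ℝ) →ₗ[ℝ] (Δ → ℝ) where
  toFun w := fun θ : Δ => ∑ δ ∈ f.coeff.support, w (θ * δ) * (f.coeff δ : ℝ)
  map_add' a b := by
    funext θ
    simp [add_mul, Finset.sum_add_distrib]
  map_smul' c a := by
    funext θ
    simp [Finset.mul_sum, mul_assoc]

theorem rhoLin_mapsTo {Δ : Type*} [Group Δ] (f : MonoidAlgebra ℤ Δ) (Λ : Subgroup Δ) :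
    ∀ w ∈ cosetV Λ, rhoLin f w ∈ cosetV Λ := by
  intro w hw l hl γ
  refine Finset.sum_congr rfl fun δ _ => ?_
  rw [mul_assoc, hw l hl (γ * δ)]

section Counting

open Matrix

variable {Q : Type*} [Fintype Q] [DecidableEq Q]

lemma index_range_mulVecLin (A : Matrix Q Q ℤ) (hA : A.det ≠ 0) :
    (LinearMap.range A.mulVecLin).toAddSubgroup.index = A.det.natAbs := by
  classical
  set N := LinearMap.range A.mulVecLin with hN
  have hinj : Function.Injective A.mulVecLin := by
    rw [← LinearMap.ker_eq_bot, Submodule.eq_bot_iff]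
    intro v hv
    by_contra hv0
    exact hA (Matrix.exists_mulVec_eq_zero_iff.mp ⟨v, hv0, hv⟩)
  let eN : (Q → ℤ) ≃ₗ[ℤ] N := LinearEquiv.ofInjective _ hinj
  obtain ⟨n, snf⟩ := N.smithNormalForm (Pi.basisFun ℤ Q)
  have hne : N.toAddSubgroup.index ≠ 0 :=
    Int.submodule_toAddSubgroup_index_ne_zero_iff.mpr ⟨eN.symm⟩
  have hn : n = Fintype.card Q := snf.toAddSubgroup_index_ne_zero_iff.mp hne
  have hidx : N.toAddSubgroup.index = ∏ i, (snf.a i).natAbs := by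
    rw [snf.toAddSubgroup_index_eq_ite, if_pos hn]
    simp [Ideal.span_singleton_toAddSubgroup_eq_zmultiples, Int.index_zmultiples]
  have hbij : Function.Bijective snf.f :=
    (Fintype.bijective_iff_injective_and_card _).mpr ⟨snf.f.injective, by simp [hn]⟩
  let e0 : Fin n ≃ Q := Equiv.ofBijective _ hbij
  let e' : (Q → ℤ) ≃ₗ[ℤ] N := snf.bM.equiv snf.bN e0.symm
  set g : (Q → ℤ) →ₗ[ℤ] (Q → ℤ) := N.subtype ∘ₗ (e' : (Q → ℤ) →ₗ[ℤ] N) with hg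
  have hga : ∀ q, g (snf.bM q) = snf.a (e0.symm q) • snf.bM q := by
    intro q
    have : g (snf.bM q) = (snf.bN (e0.symm q) : Q → ℤ) := by
      simp [hg, e', Module.Basis.equiv_apply]
    rw [this, snf.snf]
    congr 1
    exact congrArg snf.bM (e0.apply_symm_apply q)
  have hdetg : LinearMap.det g = ∏ q, snf.a (e0.symm q) := by
    rw [← LinearMap.det_toMatrix snf.bM]
    have : LinearMap.toMatrix snf.bM snf.bM g = Matrix.diagonal (fun q => snf.a (e0.symm q)) := by
      ext i j
      rw [LinearMap.toMatrix_apply, hga, _root_.map_smul, Module.Basis.repr_self]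
      by_cases h : i = j
      · subst h; simp
      · simp [Finsupp.single_apply, Ne.symm h, Matrix.diagonal_apply_ne _ h]
    rw [this, Matrix.det_diagonal]
  have hassoc : Associated A.det (LinearMap.det g) := by
    have h1 : A.mulVecLin = N.subtype ∘ₗ (eN : (Q → ℤ) →ₗ[ℤ] N) := by
      ext v; rfl
    have h2 := LinearMap.associated_det_comp_equiv N.subtype eN e'
    have h3 : A.det = LinearMap.det A.mulVecLin := by
      have : A.mulVecLin = Matrix.toLin' A := rfl
      rw [this, LinearMap.det_toLin']
    rw [h3, h1]
    exact h2
  have : A.det.natAbs = (LinearMap.det g).natAbs := Int.natAbs_eq_iff_associated.mpr hassoc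
  rw [this, hdetg, hidx]
  rw [show (∏ q : Q, snf.a (e0.symm q)).natAbs = ∏ q : Q, (snf.a (e0.symm q)).natAbs from
    map_prod Int.natAbsHom _ _]
  exact Fintype.prod_equiv e0 _ _ (fun i => by rw [e0.symm_apply_apply])

lemma tsmul_coe (a : ℤ) (r : ℝ) : a • ((r : AddCircle (1:ℝ))) = ((a * r : ℝ) : AddCircle (1:ℝ)) := by
  rw [← zsmul_eq_mul, ← QuotientAddGroup.mk_zsmul]

lemma torKer_card (A : Matrix Q Q ℤ) (hA : A.det ≠ 0) :
    {x : Q → AddCircle (1:ℝ) | ∀ q, ∑ q', A q q' • x q' = 0}.Finite ∧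
    Nat.card {x : Q → AddCircle (1:ℝ) | ∀ q, ∑ q', A q q' • x q' = 0} = A.det.natAbs := by
  classical
  set M : Matrix Q Q ℝ := A.map (Int.cast : ℤ → ℝ) with hM
  have hMdet : IsUnit M.det := by
    have h := RingHom.map_det (Int.castRingHom ℝ) A
    rw [hM, show A.map (Int.cast : ℤ → ℝ) = (Int.castRingHom ℝ).mapMatrix A from rfl, ← h]
    simp only [Int.coe_castRingHom, isUnit_iff_ne_zero, ne_eq, Int.cast_eq_zero]
    exact hA
  have hMB : M * M⁻¹ = 1 := Matrix.mul_nonsing_inv M hMdet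
  have hBM : M⁻¹ * M = 1 := Matrix.nonsing_inv_mul M hMdet
  have key : ∀ (r : Q → ℝ) (q : Q),
      (∑ q', A q q' • ((r q' : AddCircle (1:ℝ)))) = (((M.mulVec r) q : ℝ) : AddCircle (1:ℝ)) := by
    intro r q
    rw [show (((M.mulVec r) q : ℝ) : AddCircle (1:ℝ)) = ((∑ q', M q q' * r q' : ℝ) : AddCircle (1:ℝ)) from rfl]
    push_cast [QuotientAddGroup.mk_sum]
    exact Finset.sum_congr rfl fun q' _ => by rw [tsmul_coe]; rfl
  let ψ : (Q → ℤ) →+ (Q → AddCircle (1:ℝ)) :=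
  { toFun := fun n q => (((M⁻¹.mulVec (fun q' => (n q' : ℝ))) q : ℝ) : AddCircle (1:ℝ))
    map_zero' := by
      funext q
      show (((M⁻¹.mulVec (fun q' => (((0 : Q → ℤ) q' : ℝ)))) q : ℝ) : AddCircle (1:ℝ)) = 0
      rw [show (fun q' : Q => (((0 : Q → ℤ) q' : ℝ))) = (0 : Q → ℝ) from by funext; simp,
        Matrix.mulVec_zero]
      rfl
    map_add' := by
      intro a b
      funext q
      have : (fun q' => ((a q' + b q' : ℤ) : ℝ)) =
          (fun q' => ((a q' : ℝ))) + (fun q' => ((b q' : ℝ))) := by funext q'; push_cast; rfl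
      simp only [Pi.add_apply, this, Matrix.mulVec_add]
      rfl }
  have hψmem : ∀ n : Q → ℤ, ψ n ∈ {x : Q → AddCircle (1:ℝ) | ∀ q, ∑ q', A q q' • x q' = 0} := by
    intro n q
    show (∑ q', A q q' • (((M⁻¹.mulVec (fun q' => (n q' : ℝ))) q' : ℝ) : AddCircle (1:ℝ))) = 0
    rw [key]
    rw [Matrix.mulVec_mulVec, hMB]
    rw [AddCircle.coe_eq_zero_iff]
    exact ⟨n q, by simp [Matrix.one_mulVec]⟩
  have hψsurj : ∀ x ∈ {x : Q → AddCircle (1:ℝ) | ∀ q, ∑ q', A q q' • x q' = 0},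
      ∃ n : Q → ℤ, ψ n = x := by
    intro x hx
    have hs : ∀ q, ∃ r : ℝ, (r : AddCircle (1:ℝ)) = x q := fun q => QuotientAddGroup.mk_surjective (x q)
    choose r hr using hs
    have hint : ∀ q, ∃ k : ℤ, (k : ℝ) = (M.mulVec r) q := by
      intro q
      have := hx q
      simp only [← hr] at this
      rw [key] at this
      rw [AddCircle.coe_eq_zero_iff] at this
      obtain ⟨k, hk⟩ := this
      exact ⟨k, by simpa using hk⟩
    choose n hn using hint
    refine ⟨n, ?_⟩
    funext q
    show (((M⁻¹.mulVec (fun q' => (n q' : ℝ))) q : ℝ) : AddCircle (1:ℝ)) = x q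
    have : (fun q' => ((n q' : ℝ))) = M.mulVec r := by funext q'; exact hn q'
    rw [this, Matrix.mulVec_mulVec, hBM, Matrix.one_mulVec, hr]
  have hψker : ψ.ker = (LinearMap.range A.mulVecLin).toAddSubgroup := by
    ext n
    simp only [AddMonoidHom.mem_ker, Submodule.mem_toAddSubgroup, LinearMap.mem_range]
    constructor
    · intro h
      have h' : ∀ q, (((M⁻¹.mulVec (fun q' => (n q' : ℝ))) q : ℝ) : AddCircle (1:ℝ)) = 0 :=
        fun q => congrFun h q
      have hint : ∀ q, ∃ k : ℤ, (k : ℝ) = (M⁻¹.mulVec (fun q' => (n q' : ℝ))) q := by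
        intro q
        have hq := h' q
        rw [AddCircle.coe_eq_zero_iff] at hq
        obtain ⟨k, hk⟩ := hq
        exact ⟨k, by simpa using hk⟩
      choose m hm using hint
      refine ⟨m, ?_⟩
      have hmv : (fun q' => ((m q' : ℝ))) = M⁻¹.mulVec (fun q' => (n q' : ℝ)) := by
        funext q'; exact hm q'
      have : M.mulVec (fun q' => ((m q' : ℝ))) = (fun q' => ((n q' : ℝ))) := by
        rw [hmv, Matrix.mulVec_mulVec, hMB, Matrix.one_mulVec]
      funext q
      have hq := congrFun this q
      have hcast : (M.mulVec (fun q' => ((m q' : ℝ)))) q = ((A.mulVec m q : ℤ) : ℝ) := by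
        simp only [Matrix.mulVec, dotProduct, hM, Matrix.map_apply]
        push_cast
        rfl
      rw [hcast] at hq
      exact_mod_cast hq
    · rintro ⟨m, rfl⟩
      funext q
      show (((M⁻¹.mulVec (fun q' => ((A.mulVecLin m q' : ℤ) : ℝ))) q : ℝ) : AddCircle (1:ℝ)) = 0
      have hcast : (fun q' => ((A.mulVecLin m q' : ℤ) : ℝ)) =
          M.mulVec (fun q' => ((m q' : ℝ))) := by
        funext q'
        simp only [Matrix.mulVecLin_apply, Matrix.mulVec, dotProduct, hM,
          Matrix.map_apply]
        push_cast
        rfl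
      rw [hcast, Matrix.mulVec_mulVec, hBM, Matrix.one_mulVec]
      rw [AddCircle.coe_eq_zero_iff]
      exact ⟨m q, by simp⟩
  have hrange : (ψ.range : Set (Q → AddCircle (1:ℝ))) = {x : Q → AddCircle (1:ℝ) | ∀ q, ∑ q', A q q' • x q' = 0} := by
    ext x
    constructor
    · rintro ⟨n, rfl⟩; exact hψmem n
    · intro hx; obtain ⟨n, hn⟩ := hψsurj x hx; exact ⟨n, hn⟩
  have e1 : ((Q → ℤ) ⧸ ψ.ker) ≃+ ψ.range := QuotientAddGroup.quotientKerEquivRange ψ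
  have hcard : Nat.card {x : Q → AddCircle (1:ℝ) | ∀ q, ∑ q', A q q' • x q' = 0} = A.det.natAbs := by
    have h2 : Nat.card {x : Q → AddCircle (1:ℝ) | ∀ q, ∑ q', A q q' • x q' = 0} = Nat.card ψ.range := by
      rw [← hrange]; rfl
    rw [h2, ← Nat.card_congr e1.toEquiv]
    have h3 : Nat.card ((Q → ℤ) ⧸ ψ.ker) = ψ.ker.index := rfl
    rw [h3, hψker, index_range_mulVecLin A hA]
  refine ⟨?_, hcard⟩
  have : Finite {x : Q → AddCircle (1:ℝ) | ∀ q, ∑ q', A q q' • x q' = 0} := by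
    apply Nat.finite_of_card_ne_zero
    rw [hcard]
    simpa using hA
  exact Set.toFinite _

end Counting

section Part2

variable {Δ : Type*} [Group Δ] [DecidableEq Δ]

abbrev QΛ (Λ : Subgroup Δ) : Type _ := Quotient (QuotientGroup.rightRel Λ)

noncomputable instance QΛfin (Λ : Subgroup Δ) [Λ.FiniteIndex] : Fintype (QΛ Λ) := by
  have : Finite (QΛ Λ) :=
    Finite.of_equiv _ (QuotientGroup.quotientRightRelEquivQuotientLeftRel Λ).symm
  exact Fintype.ofFinite _

lemma mk_mul_left (Λ : Subgroup Δ) {l : Δ} (hl : l ∈ Λ) (γ : Δ) :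
    (Quotient.mk'' (l * γ) : QΛ Λ) = Quotient.mk'' γ := by
  apply Quotient.sound'
  apply (QuotientGroup.rightRel_apply).mpr
  have h : γ * (l * γ)⁻¹ = l⁻¹ := by group
  rw [h]
  exact Λ.inv_mem hl

open Classical in
noncomputable def Amat (f : MonoidAlgebra ℤ Δ) (Λ : Subgroup Δ) :
    Matrix (QΛ Λ) (QΛ Λ) ℤ := fun q q' =>
  Quotient.liftOn q (fun θ => ∑ δ ∈ f.coeff.support,
      if (Quotient.mk'' (θ * δ) : QΛ Λ) = q' then f.coeff δ else 0) (by
    intro θ₁ θ₂ h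
    refine Finset.sum_congr rfl fun δ _ => ?_
    have hq : (Quotient.mk'' (θ₁ * δ) : QΛ Λ) = Quotient.mk'' (θ₂ * δ) := by
      apply Quotient.sound'
      apply (QuotientGroup.rightRel_apply).mpr
      have h' := (QuotientGroup.rightRel_apply).mp h
      have he : (θ₂ * δ) * (θ₁ * δ)⁻¹ = θ₂ * θ₁⁻¹ := by group
      rw [he]
      exact h'
    rw [hq])

lemma Amat_sum {M : Type*} [AddCommGroup M] (f : MonoidAlgebra ℤ Δ) (Λ : Subgroup Δ)
    [Fintype (QΛ Λ)] (x : QΛ Λ → M) (θ : Δ) :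
    ∑ q' : QΛ Λ, Amat f Λ (Quotient.mk'' θ) q' • x q' =
      ∑ δ ∈ f.coeff.support, f.coeff δ • x (Quotient.mk'' (θ * δ)) := by
  classical
  rw [← Finset.sum_fiberwise f.coeff.support (fun δ => (Quotient.mk'' (θ * δ) : QΛ Λ))
      (fun δ => f.coeff δ • x (Quotient.mk'' (θ * δ)))]
  refine Finset.sum_congr rfl fun q' _ => ?_
  have hA : Amat f Λ (Quotient.mk'' θ) q' =
      ∑ δ ∈ f.coeff.support.filter (fun δ => (Quotient.mk'' (θ * δ) : QΛ Λ) = q'), f.coeff δ := by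
    show (∑ δ ∈ f.coeff.support, if (Quotient.mk'' (θ * δ) : QΛ Λ) = q' then f.coeff δ else 0) = _
    rw [Finset.sum_filter]
  rw [hA, Finset.sum_smul]
  refine Finset.sum_congr rfl fun δ hδ => ?_
  rw [(Finset.mem_filter.mp hδ).2]

-- analytic lemma
lemma l1_kills (f : MonoidAlgebra ℤ Δ) {w : Δ → ℝ}
    (hw : IsL1Inverse f w) (u : Δ → ℝ) (C : ℝ) (hC : ∀ γ, |u γ| ≤ C)
    (hu : ∀ θ : Δ, ∑ δ ∈ f.coeff.support, u (θ * δ) * (f.coeff δ : ℝ) = 0) (γ : Δ) : u γ = 0 := by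
  obtain ⟨hws, hw1, hw2⟩ := hw
  have hwabs : ∀ δ : Δ, Summable (fun ζ : Δ => |w (ζ * δ)|) := by
    intro δ
    exact hws.comp_injective (mul_left_injective δ)
  have hS : ∀ (a : Δ → ℝ) (δ : Δ), (∀ ζ, |a ζ| ≤ C) →
      Summable (fun ζ => a ζ * w (ζ * δ)) := by
    intro a δ ha
    apply Summable.of_abs
    apply Summable.of_nonneg_of_le (fun ζ => abs_nonneg _) (fun ζ => ?_) ((hwabs δ).mul_left C)
    rw [abs_mul]
    exact mul_le_mul_of_nonneg_right (ha ζ) (abs_nonneg _)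
  have hS0 : ∀ (a : Δ → ℝ), (∀ ζ, |a ζ| ≤ C) → Summable (fun ζ => a ζ * w ζ) := by
    intro a ha
    simpa using hS a 1 ha
  have h1 : u γ = ∑' ζ : Δ, u (γ * ζ) * (if ζ = 1 then 1 else 0) := by
    rw [tsum_eq_single 1 (fun b hb => by simp [hb])]
    simp
  rw [h1]
  have h2 : ∀ ζ : Δ, u (γ * ζ) * (if ζ = 1 then 1 else 0)
      = ∑ δ ∈ f.coeff.support, u (γ * ζ) * w (ζ * δ⁻¹) * (f.coeff δ : ℝ) := by
    intro ζ
    rw [← hw2 ζ, Finset.mul_sum]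
    exact Finset.sum_congr rfl fun δ _ => (mul_assoc _ _ _).symm
  rw [tsum_congr h2]
  have hSd : ∀ δ ∈ f.coeff.support, Summable (fun ζ : Δ => u (γ * ζ) * w (ζ * δ⁻¹) * (f.coeff δ : ℝ)) := by
    intro δ _
    exact (hS (fun ζ => u (γ * ζ)) δ⁻¹ (fun ζ => hC _)).mul_right _
  rw [Summable.tsum_finsetSum hSd]
  have h3 : ∀ δ ∈ f.coeff.support, ∑' ζ : Δ, u (γ * ζ) * w (ζ * δ⁻¹) * (f.coeff δ : ℝ)
      = ∑' ξ : Δ, u (γ * ξ * δ) * w ξ * (f.coeff δ : ℝ) := by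
    intro δ _
    rw [← (Equiv.mulRight δ).tsum_eq]
    apply tsum_congr; intro ξ
    simp [mul_assoc]
  rw [Finset.sum_congr rfl h3]
  have hSd' : ∀ δ ∈ f.coeff.support, Summable (fun ξ : Δ => u (γ * ξ * δ) * w ξ * (f.coeff δ : ℝ)) := by
    intro δ _
    exact (hS0 (fun ξ => u (γ * ξ * δ)) (fun ξ => hC _)).mul_right _
  rw [← Summable.tsum_finsetSum hSd']
  have h4 : ∀ ξ : Δ, ∑ δ ∈ f.coeff.support, u (γ * ξ * δ) * w ξ * (f.coeff δ : ℝ) = 0 := by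
    intro ξ
    calc ∑ δ ∈ f.coeff.support, u (γ * ξ * δ) * w ξ * (f.coeff δ : ℝ)
        = (∑ δ ∈ f.coeff.support, u (γ * ξ * δ) * (f.coeff δ : ℝ)) * w ξ := by
          rw [Finset.sum_mul]; exact Finset.sum_congr rfl fun δ _ => by ring
      _ = 0 := by rw [hu (γ * ξ), zero_mul]
  rw [tsum_congr h4, tsum_zero]

end Part2

section Part3

variable {Δ : Type*} [Group Δ] [DecidableEq Δ]

noncomputable def cosetEquivLin (Λ : Subgroup Δ) [Fintype (QΛ Λ)] :
    (QΛ Λ → ℝ) ≃ₗ[ℝ] ↥(cosetV Λ) where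
  toFun x := ⟨fun γ => x (Quotient.mk'' γ), fun l hl γ => congrArg x (mk_mul_left Λ hl γ)⟩
  map_add' a b := rfl
  map_smul' c a := rfl
  invFun v q := Quotient.liftOn q (v : Δ → ℝ) (by
    intro θ₁ θ₂ h
    have h' := (QuotientGroup.rightRel_apply).mp h
    have h2 := v.2 (θ₂ * θ₁⁻¹) h' θ₁
    simpa [inv_mul_cancel_right] using h2.symm)
  left_inv x := funext fun q => Quotient.inductionOn q (fun θ => rfl)
  right_inv v := Subtype.ext rfl

lemma Amat_sum_real (f : MonoidAlgebra ℤ Δ) (Λ : Subgroup Δ) [Fintype (QΛ Λ)]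
    (x : QΛ Λ → ℝ) (θ : Δ) :
    ∑ q' : QΛ Λ, ((Amat f Λ (Quotient.mk'' θ) q' : ℤ) : ℝ) * x q' =
      ∑ δ ∈ f.coeff.support, x (Quotient.mk'' (θ * δ)) * (f.coeff δ : ℝ) := by
  have h := Amat_sum (M := ℝ) f Λ x θ
  simp only [zsmul_eq_mul] at h
  rw [h]
  exact Finset.sum_congr rfl fun δ _ => mul_comm _ _

lemma det_restrict (f : MonoidAlgebra ℤ Δ) (Λ : Subgroup Δ) [Fintype (QΛ Λ)]
    [DecidableEq (QΛ Λ)] :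
    LinearMap.det ((rhoLin f).restrict (rhoLin_mapsTo f Λ)) = (((Amat f Λ).det : ℤ) : ℝ) := by
  classical
  set M : Matrix (QΛ Λ) (QΛ Λ) ℝ := (Amat f Λ).map (Int.cast : ℤ → ℝ) with hM
  have hconj : (rhoLin f).restrict (rhoLin_mapsTo f Λ) =
      (cosetEquivLin Λ).toLinearMap ∘ₗ Matrix.toLin' M ∘ₗ (cosetEquivLin Λ).symm.toLinearMap := by
    apply LinearMap.ext
    intro v
    apply Subtype.ext
    funext γ
    show (rhoLin f (v : Δ → ℝ)) γ =
      (Matrix.toLin' M ((cosetEquivLin Λ).symm v)) (Quotient.mk'' γ)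
    rw [Matrix.toLin'_apply]
    have h1 : M.mulVec ((cosetEquivLin Λ).symm v) (Quotient.mk'' γ)
        = ∑ q' : QΛ Λ, ((Amat f Λ (Quotient.mk'' γ) q' : ℤ) : ℝ) *
            ((cosetEquivLin Λ).symm v) q' := rfl
    rw [h1, Amat_sum_real]
    rfl
  rw [hconj]
  have hdc := LinearMap.det_conj (Matrix.toLin' M) (cosetEquivLin Λ)
  rw [show (cosetEquivLin Λ).toLinearMap ∘ₗ Matrix.toLin' M ∘ₗ (cosetEquivLin Λ).symm.toLinearMap
      = ((cosetEquivLin Λ : (QΛ Λ → ℝ) →ₗ[ℝ] ↥(cosetV Λ)) ∘ₗ Matrix.toLin' M ∘ₗ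
        ((cosetEquivLin Λ).symm : ↥(cosetV Λ) →ₗ[ℝ] (QΛ Λ → ℝ))) from rfl, hdc,
    LinearMap.det_toLin']
  rw [hM, show (Amat f Λ).map (Int.cast : ℤ → ℝ) = (Int.castRingHom ℝ).mapMatrix (Amat f Λ)
    from rfl, ← RingHom.map_det]
  rfl

lemma Amat_det_ne_zero (f : MonoidAlgebra ℤ Δ) (hf : L1Invertible f) (Λ : Subgroup Δ)
    [Fintype (QΛ Λ)] [DecidableEq (QΛ Λ)] : (Amat f Λ).det ≠ 0 := by
  classical
  intro h0
  obtain ⟨v, hv0, hv⟩ := Matrix.exists_mulVec_eq_zero_iff.mpr h0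
  obtain ⟨w, hw⟩ := hf
  set u : Δ → ℝ := fun γ => (v (Quotient.mk'' γ) : ℝ) with hu_def
  have hC : ∀ γ : Δ, |u γ| ≤ ∑ q : QΛ Λ, |(v q : ℝ)| := fun γ =>
    Finset.single_le_sum (f := fun q => |(v q : ℝ)|) (fun q _ => abs_nonneg _) (Finset.mem_univ _)
  have hu : ∀ θ : Δ, ∑ δ ∈ f.coeff.support, u (θ * δ) * (f.coeff δ : ℝ) = 0 := by
    intro θ
    have h1 : ∑ δ ∈ f.coeff.support, f.coeff δ • v (Quotient.mk'' (θ * δ)) = 0 := by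
      rw [← Amat_sum]
      have h2 := congrFun hv (Quotient.mk'' θ)
      simpa [Matrix.mulVec, dotProduct, zsmul_eq_mul] using h2
    have h3 : ∑ δ ∈ f.coeff.support, u (θ * δ) * (f.coeff δ : ℝ)
        = ((∑ δ ∈ f.coeff.support, f.coeff δ • v (Quotient.mk'' (θ * δ)) : ℤ) : ℝ) := by
      push_cast
      refine Finset.sum_congr rfl fun δ _ => ?_
      rw [smul_eq_mul]
      push_cast
      ring
    rw [h3, h1, Int.cast_zero]
  have hkill := l1_kills f hw u _ hC hu
  apply hv0
  funext q
  refine Quotient.inductionOn q fun θ => ?_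
  have h5 : ((v (Quotient.mk'' θ) : ℤ) : ℝ) = 0 := hkill θ
  show v (Quotient.mk'' θ) = 0
  exact_mod_cast h5

noncomputable def fixedEquiv (f : MonoidAlgebra ℤ Δ) (Λ : Subgroup Δ) [Fintype (QΛ Λ)] :
    {t : ↥(Xf f) | ∀ l ∈ Λ, ∀ γ : Δ,
        (t : Δ → T1) (l⁻¹ * γ) = (t : Δ → T1) γ} ≃
    {x : QΛ Λ → T1 | ∀ q, ∑ q', Amat f Λ q q' • x q' = 0} where
  toFun t := ⟨fun q => Quotient.liftOn q (fun γ => ((t : ↥(Xf f)) : Δ → T1) γ) (by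
      intro θ₁ θ₂ h
      have hl := (QuotientGroup.rightRel_apply).mp h
      have ht := t.2 (θ₂ * θ₁⁻¹) hl θ₂
      have he : (θ₂ * θ₁⁻¹)⁻¹ * θ₂ = θ₁ := by group
      rw [he] at ht
      exact ht), by
    refine fun q => Quotient.inductionOn q fun θ => ?_
    rw [Amat_sum]
    exact (t : ↥(Xf f)).2 θ⟩
  invFun x := ⟨⟨fun γ => x.1 (Quotient.mk'' γ), by
      intro θ
      have hx := x.2 (Quotient.mk'' θ)
      rw [Amat_sum] at hx
      exact hx⟩, by
      intro l hl γ
      show x.1 (Quotient.mk'' (l⁻¹ * γ)) = x.1 (Quotient.mk'' γ)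
      rw [mk_mul_left Λ (Λ.inv_mem hl)]⟩
  left_inv t := by
    apply Subtype.ext; apply Subtype.ext; funext γ; rfl
  right_inv x := by
    apply Subtype.ext; funext q
    exact Quotient.inductionOn q fun θ => rfl

end Part3

/-- For `f ∈ ℤΔ` invertible in `ℓ¹(Δ,ℝ)` and a finite-index subgroup
`Λ ≤ Δ`, the set of `Λ`-fixed points of `α_f` is finite, of cardinality
`|det(ρ_f|_V)|` where `V` is the space of functions constant on right cosets of `Λ`. -/
theorem card_fixed_points_eq_abs_det
    {Δ : Type*} [Group Δ] [Countable Δ] [DecidableEq Δ]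
    (f : MonoidAlgebra ℤ Δ) (hf : L1Invertible f)
    (Λ : Subgroup Δ) [Λ.FiniteIndex] :
    {t : ↥(Xf f) | ∀ l ∈ Λ, ∀ γ : Δ,
        (t : Δ → T1) (l⁻¹ * γ) = (t : Δ → T1) γ}.Finite ∧
      (Nat.card {t : ↥(Xf f) | ∀ l ∈ Λ, ∀ γ : Δ,
          (t : Δ → T1) (l⁻¹ * γ) = (t : Δ → T1) γ} : ℝ) =
        |LinearMap.det ((rhoLin f).restrict (rhoLin_mapsTo f Λ))| := by
  classical
  haveI : DecidableEq (QΛ Λ) := Classical.decEq _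
  obtain ⟨hfin, hcard⟩ := torKer_card (Amat f Λ) (Amat_det_ne_zero f hf Λ)
  have e := fixedEquiv f Λ
  haveI hfinK : Finite {x : QΛ Λ → T1 | ∀ q, ∑ q', Amat f Λ q q' • x q' = 0} :=
    hfin.to_subtype
  refine ⟨?_, ?_⟩
  · have : Finite {t : ↥(Xf f) | ∀ l ∈ Λ, ∀ γ : Δ,
        (t : Δ → T1) (l⁻¹ * γ) = (t : Δ → T1) γ} := Finite.of_equiv _ e.symm
    exact Set.finite_coe_iff.mp this
  · rw [Nat.card_congr e, hcard, det_restrict f Λ, Nat.cast_natAbs, Int.cast_abs]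
end
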